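/- arXiv:2302.09047 — 3 statements merged into one kernel-verified Lean document; each statement's English description precedes it below -/
import Mathlib

section
/- For a uniformly random subset S of {0,1}^n, the second moment of the number X_r of r-dimensional subcubes contained in S equals Σ_{i=0}^{r} [n! · 2^{n-i} / (i! · (r-i)!² · (n-2r+i)! · 2^{2^{r+1}})] · (2^{2^i} − 1) + [(n choose r) · 2^{n-r}]² / 2^{2^{r+1}}, for n ≥ 2r. -/
open Finset

def cube {n : ℕ} (w : Fin n → Option Bool) : Finset (Fin n → Bool) :=
  Finset.univ.filter fun x => ∀ i, ∀ b, w i = some b → x i = b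

def Word (n r : ℕ) : Finset (Fin n → Option Bool) :=
  Finset.univ.filter fun w => (Finset.univ.filter fun i => w i = none).card = r

/-- Expectation with respect to a uniformly random subset `S ⊆ {0,1}^n`. -/
noncomputable def Ex (n : ℕ) (f : Finset (Fin n → Bool) → ℝ) : ℝ :=
  (∑ S : Finset (Fin n → Bool), f S) / (Fintype.card (Finset (Fin n → Bool)))

/-- The number of `r`-dimensional subcubes contained in `S`. -/
def Xr (n r : ℕ) (S : Finset (Fin n → Bool)) : ℕ :=
  ((Word n r).filter fun w => cube w ⊆ S).card

section Helpers

variable {n : ℕ}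


def tset (w : Fin n → Option Bool) (i : Fin n) : Finset Bool :=
  (w i).elim Finset.univ (fun b => {b})

def noneSet (w : Fin n → Option Bool) : Finset (Fin n) :=
  Finset.univ.filter fun i => w i = none

def agrees (w w' : Fin n → Option Bool) : Prop :=
  ∀ i, w i = none ∨ w' i = none ∨ w i = w' i

instance (w w' : Fin n → Option Bool) : Decidable (agrees w w') := by
  unfold agrees; infer_instance

lemma cube_eq (w : Fin n → Option Bool) : cube w = Fintype.piFinset (tset w) := by
  ext x
  simp only [cube, mem_filter, mem_univ, true_and, Fintype.mem_piFinset, tset]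
  constructor
  · intro h i
    cases hw : w i with
    | none => simp
    | some b => simp [h i b hw]
  · intro h i b hw
    have := h i
    rw [hw] at this
    simpa using this

lemma card_cube (w : Fin n → Option Bool) :
    (cube w).card = 2 ^ (noneSet w).card := by
  rw [cube_eq, Fintype.card_piFinset,
    ← Finset.prod_filter_mul_prod_filter_not univ (fun i => w i = none)]
  have h1 : ∀ i ∈ univ.filter (fun i => w i = none), (tset w i).card = 2 := by
    intro i hi; simp only [mem_filter] at hi; simp [tset, hi.2]
  have h2 : ∀ i ∈ univ.filter (fun i => ¬ w i = none), (tset w i).card = 1 := by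
    intro i hi; simp only [mem_filter] at hi
    obtain ⟨b, hb⟩ := Option.ne_none_iff_exists'.mp hi.2
    simp [tset, hb]
  rw [Finset.prod_congr rfl h1, Finset.prod_congr rfl h2]
  simp [noneSet]

lemma cube_inter_eq (w w' : Fin n → Option Bool) :
    cube w ∩ cube w' = Fintype.piFinset (fun i => tset w i ∩ tset w' i) := by
  ext x
  simp [cube_eq, Fintype.mem_piFinset, forall_and]

lemma card_cube_inter (w w' : Fin n → Option Bool) (hag : agrees w w') :
    (cube w ∩ cube w').card = 2 ^ (noneSet w ∩ noneSet w').card := by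
  rw [cube_inter_eq, Fintype.card_piFinset,
    ← Finset.prod_filter_mul_prod_filter_not univ (fun i => w i = none ∧ w' i = none)]
  have h1 : ∀ i ∈ univ.filter (fun i => w i = none ∧ w' i = none),
      (tset w i ∩ tset w' i).card = 2 := by
    intro i hi; simp only [mem_filter] at hi
    simp [tset, hi.2.1, hi.2.2]
  have h2 : ∀ i ∈ univ.filter (fun i => ¬ (w i = none ∧ w' i = none)),
      (tset w i ∩ tset w' i).card = 1 := by
    intro i hi; simp only [mem_filter, not_and_or] at hi
    rcases hag i with h | h | h
    · rcases hi.2 with h' | h'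
      · exact absurd h h'
      · obtain ⟨b, hb⟩ := Option.ne_none_iff_exists'.mp h'
        simp [tset, h, hb]
    · rcases hi.2 with h' | h'
      · obtain ⟨b, hb⟩ := Option.ne_none_iff_exists'.mp h'
        simp [tset, h, hb]
      · exact absurd h h'
    · cases hw : w i with
      | none =>
        rcases hi.2 with h' | h'
        · exact absurd hw h'
        · exact absurd (h ▸ hw) h'
      | some b =>
        have hw' : w' i = some b := h ▸ hw
        simp [tset, hw, hw']
  rw [Finset.prod_congr rfl h1, Finset.prod_congr rfl h2]
  have : noneSet w ∩ noneSet w' = univ.filter (fun i => w i = none ∧ w' i = none) := by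
    ext i; simp [noneSet]
  simp [this]

lemma card_cube_inter_of_not (w w' : Fin n → Option Bool) (hag : ¬ agrees w w') :
    (cube w ∩ cube w').card = 0 := by
  rw [Finset.card_eq_zero, Finset.eq_empty_iff_forall_notMem]
  intro x hx
  simp only [mem_inter, cube, mem_filter, mem_univ, true_and] at hx
  apply hag
  intro i
  cases hw : w i with
  | none => exact Or.inl rfl
  | some b =>
    cases hw' : w' i with
    | none => exact Or.inr (Or.inl rfl)
    | some b' =>
      refine Or.inr (Or.inr ?_)
      have hbb : b = b' := (hx.1 i b hw).symm.trans (hx.2 i b' hw')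
      exact hbb ▸ rfl


lemma count_supersets {α : Type*} [Fintype α] [DecidableEq α] (T : Finset α) :
    ((univ : Finset (Finset α)).filter fun S => T ⊆ S).card
      = 2 ^ (Fintype.card α - T.card) := by
  rw [← Finset.card_compl T, ← Finset.card_powerset]
  apply Finset.card_bij' (fun S _ => S \ T) (fun U _ => U ∪ T)
  · intro S hS
    simp only [mem_filter, mem_univ, true_and] at hS
    simp only [Finset.mem_powerset]
    intro x hx
    simp only [Finset.mem_sdiff] at hx
    simp [hx.2]
  · intro U hU
    simp [mem_filter]
  · intro S hS
    simp only [mem_filter, mem_univ, true_and] at hS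
    exact Finset.sdiff_union_of_subset hS
  · intro U hU
    simp only [Finset.mem_powerset] at hU
    rw [Finset.union_sdiff_right]
    have : Disjoint U T := disjoint_compl_left.mono_left hU
    exact Finset.sdiff_eq_self_of_disjoint this


lemma mem_word_iff {r : ℕ} {w : Fin n → Option Bool} :
    w ∈ Word n r ↔ (noneSet w).card = r := by
  simp [Word, noneSet]

lemma mem_noneSet_iff {w : Fin n → Option Bool} {j : Fin n} :
    j ∈ noneSet w ↔ w j = none := by simp [noneSet]

lemma mem_pair_finset (o : Option Bool) :
    o ∈ ({some true, some false} : Finset (Option Bool)) ↔ o ≠ none := by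
  cases o with
  | none => simp
  | some b => cases b <;> simp

/-! ### Counting `Word n r` -/

def wordFiber (A : Finset (Fin n)) : Finset (Fin n → Option Bool) :=
  Fintype.piFinset fun j =>
    if j ∈ A then ({none} : Finset (Option Bool)) else {some true, some false}

lemma noneSet_of_mem_wordFiber {A : Finset (Fin n)} {w : Fin n → Option Bool}
    (hw : w ∈ wordFiber A) : noneSet w = A := by
  rw [wordFiber, Fintype.mem_piFinset] at hw
  ext j
  rw [mem_noneSet_iff]
  have := hw j
  by_cases hj : j ∈ A
  · rw [if_pos hj] at this
    simp only [Finset.mem_singleton] at this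
    simp [this, hj]
  · rw [if_neg hj] at this
    rw [mem_pair_finset] at this
    simp [this, hj]

lemma card_wordFiber (A : Finset (Fin n)) :
    (wordFiber A).card = 2 ^ (n - A.card) := by
  rw [wordFiber, Fintype.card_piFinset,
    ← Finset.prod_filter_mul_prod_filter_not univ (fun j => j ∈ A)]
  have h1 : ∀ j ∈ univ.filter (fun j => j ∈ A),
      ((if j ∈ A then ({none} : Finset (Option Bool)) else {some true, some false}).card) = 1 := by
    intro j hj; simp only [mem_filter] at hj; simp [hj.2]
  have h2 : ∀ j ∈ univ.filter (fun j => ¬ j ∈ A),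
      ((if j ∈ A then ({none} : Finset (Option Bool)) else {some true, some false}).card) = 2 := by
    intro j hj; simp only [mem_filter] at hj
    rw [if_neg hj.2]
    decide
  rw [Finset.prod_congr rfl h1, Finset.prod_congr rfl h2]
  have : univ.filter (fun j => ¬ j ∈ A) = Aᶜ := by ext j; simp
  simp [this, Finset.card_compl]

lemma word_decomp (n r : ℕ) :
    Word n r = ((univ : Finset (Fin n)).powersetCard r).biUnion wordFiber := by
  ext w
  simp only [Finset.mem_biUnion, Finset.mem_powersetCard]
  constructor
  · intro hw
    rw [mem_word_iff] at hw
    refine ⟨noneSet w, ⟨Finset.subset_univ _, hw⟩, ?_⟩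
    rw [wordFiber, Fintype.mem_piFinset]
    intro j
    by_cases hj : j ∈ noneSet w
    · rw [if_pos hj]
      rw [mem_noneSet_iff] at hj
      simp [hj]
    · rw [if_neg hj, mem_pair_finset]
      rw [mem_noneSet_iff] at hj
      exact hj
  · rintro ⟨A, ⟨-, hA⟩, hw⟩
    rw [mem_word_iff, noneSet_of_mem_wordFiber hw, hA]

lemma card_word (n r : ℕ) (_h : r ≤ n) :
    (Word n r).card = n.choose r * 2 ^ (n - r) := by
  rw [word_decomp, Finset.card_biUnion]
  · have : ∀ A ∈ (univ : Finset (Fin n)).powersetCard r,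
        (wordFiber A).card = 2 ^ (n - r) := by
      intro A hA
      rw [Finset.mem_powersetCard] at hA
      rw [card_wordFiber, hA.2]
    rw [Finset.sum_congr rfl this, Finset.sum_const, Finset.card_powersetCard, card_univ,
      Fintype.card_fin, smul_eq_mul]
  · intro A hA A' hA' hne
    rw [Function.onFun, Finset.disjoint_left]
    intro w hw hw'
    exact hne ((noneSet_of_mem_wordFiber hw).symm.trans (noneSet_of_mem_wordFiber hw'))

/-! ### Counting agreeing pairs with given common-free count -/

def pairFiber (w : Fin n → Option Bool) (A B : Finset (Fin n)) :
    Finset (Fin n → Option Bool) :=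
  Fintype.piFinset fun j =>
    if j ∈ A ∪ B then ({none} : Finset (Option Bool))
    else if w j = none then {some true, some false} else {w j}

lemma noneSet_of_mem_pairFiber {w : Fin n → Option Bool} {A B : Finset (Fin n)}
    {w' : Fin n → Option Bool} (hw' : w' ∈ pairFiber w A B) : noneSet w' = A ∪ B := by
  rw [pairFiber, Fintype.mem_piFinset] at hw'
  ext j
  rw [mem_noneSet_iff]
  have := hw' j
  by_cases hj : j ∈ A ∪ B
  · rw [if_pos hj] at this
    simp only [Finset.mem_singleton] at this
    simp [this, hj]
  · rw [if_neg hj] at this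
    by_cases hwj : w j = none
    · rw [if_pos hwj, mem_pair_finset] at this
      simp [this, hj]
    · rw [if_neg hwj] at this
      simp only [Finset.mem_singleton] at this
      simp [this, hj, hwj]

lemma card_pairFiber {w : Fin n → Option Bool} {A B : Finset (Fin n)}
    (hA : A ⊆ noneSet w) (hB : B ⊆ (noneSet w)ᶜ) :
    (pairFiber w A B).card = 2 ^ ((noneSet w).card - A.card) := by
  rw [pairFiber, Fintype.card_piFinset,
    ← Finset.prod_filter_mul_prod_filter_not univ (fun j => ¬ j ∈ A ∪ B ∧ w j = none)]
  have h1 : ∀ j ∈ univ.filter (fun j => ¬ j ∈ A ∪ B ∧ w j = none),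
      ((if j ∈ A ∪ B then ({none} : Finset (Option Bool))
        else if w j = none then {some true, some false} else {w j}).card) = 2 := by
    intro j hj; simp only [mem_filter] at hj
    rw [if_neg hj.2.1, if_pos hj.2.2]
    decide
  have h2 : ∀ j ∈ univ.filter (fun j => ¬ (¬ j ∈ A ∪ B ∧ w j = none)),
      ((if j ∈ A ∪ B then ({none} : Finset (Option Bool))
        else if w j = none then {some true, some false} else {w j}).card) = 1 := by
    intro j hj; simp only [mem_filter, not_and_or, not_not] at hj
    rcases hj.2 with hj2 | hj2
    · rw [if_pos hj2]; rfl
    · by_cases hju : j ∈ A ∪ B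
      · rw [if_pos hju]; rfl
      · rw [if_neg hju, if_neg hj2]; rfl
  rw [Finset.prod_congr rfl h1, Finset.prod_congr rfl h2]
  have hfil : univ.filter (fun j => ¬ j ∈ A ∪ B ∧ w j = none) = noneSet w \ A := by
    ext j
    simp only [mem_filter, mem_univ, true_and, Finset.mem_sdiff, Finset.mem_union,
      mem_noneSet_iff, not_or]
    constructor
    · rintro ⟨⟨hjA, hjB⟩, hwj⟩; exact ⟨hwj, hjA⟩
    · rintro ⟨hwj, hjA⟩
      refine ⟨⟨hjA, ?_⟩, hwj⟩
      intro hjB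
      have := hB hjB
      rw [Finset.mem_compl, mem_noneSet_iff] at this
      exact this hwj
  rw [hfil, Finset.prod_const, Finset.prod_const, one_pow, mul_one, Finset.card_sdiff_of_subset hA]

lemma pair_decomp (n r i : ℕ) (hi : i ≤ r) (w : Fin n → Option Bool) :
    (Word n r).filter (fun w' => agrees w w' ∧ (noneSet w ∩ noneSet w').card = i)
      = (((noneSet w).powersetCard i ×ˢ ((noneSet w)ᶜ).powersetCard (r - i)).biUnion
          fun q => pairFiber w q.1 q.2) := by
  ext w'
  simp only [Finset.mem_biUnion, Finset.mem_product, Finset.mem_powersetCard, mem_filter]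
  constructor
  · rintro ⟨hw', hag, hc⟩
    rw [mem_word_iff] at hw'
    refine ⟨(noneSet w ∩ noneSet w', noneSet w' \ noneSet w), ⟨⟨Finset.inter_subset_left, hc⟩,
      ⟨?_, ?_⟩⟩, ?_⟩
    · intro j hj
      rw [Finset.mem_sdiff] at hj
      rw [Finset.mem_compl]
      exact hj.2
    · show (noneSet w' \ noneSet w).card = r - i
      have := Finset.card_inter_add_card_sdiff (noneSet w') (noneSet w)
      rw [Finset.inter_comm] at hc
      omega
    · rw [pairFiber, Fintype.mem_piFinset]
      intro j
      have hun : (noneSet w ∩ noneSet w') ∪ (noneSet w' \ noneSet w) = noneSet w' := by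
        ext j
        simp only [Finset.mem_union, Finset.mem_inter, Finset.mem_sdiff]
        tauto
      by_cases hj : j ∈ (noneSet w ∩ noneSet w', noneSet w' \ noneSet w).1
          ∪ (noneSet w ∩ noneSet w', noneSet w' \ noneSet w).2
      · rw [if_pos hj]
        have : j ∈ noneSet w' := hun ▸ hj
        rw [mem_noneSet_iff] at this
        simp [this]
      · rw [if_neg hj]
        have hj'' : j ∉ noneSet w' := by rw [← hun]; exact hj
        have hj' : w' j ≠ none := fun hh => hj'' (mem_noneSet_iff.mpr hh)
        by_cases hwj : w j = none
        · rw [if_pos hwj, mem_pair_finset]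
          exact hj'
        · rw [if_neg hwj]
          rcases hag j with h | h | h
          · exact absurd h hwj
          · exact absurd h hj'
          · simp [← h]
  · rintro ⟨⟨A, B⟩, ⟨⟨hA, hAc⟩, hB, hBc⟩, hw'⟩
    have hns : noneSet w' = A ∪ B := noneSet_of_mem_pairFiber hw'
    have hdisj : Disjoint A B := by
      refine Finset.disjoint_left.mpr fun j hjA hjB => ?_
      have := hB hjB
      rw [Finset.mem_compl] at this
      exact this (hA hjA)
    have hNint : noneSet w ∩ (A ∪ B) = A := by
      ext j
      simp only [Finset.mem_inter, Finset.mem_union]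
      constructor
      · rintro ⟨hjN, hjA | hjB⟩
        · exact hjA
        · exact absurd hjN (Finset.mem_compl.mp (hB hjB))
      · intro hjA
        exact ⟨hA hjA, Or.inl hjA⟩
    refine ⟨?_, ?_, ?_⟩
    · rw [mem_word_iff, hns, Finset.card_union_of_disjoint hdisj, hAc, hBc]
      omega
    · intro j
      by_cases hwj : w j = none
      · exact Or.inl hwj
      · by_cases hj : j ∈ A ∪ B
        · refine Or.inr (Or.inl ?_)
          rw [← mem_noneSet_iff, hns]
          exact hj
        · refine Or.inr (Or.inr ?_)
          rw [pairFiber, Fintype.mem_piFinset] at hw'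
          have := hw' j
          rw [if_neg hj, if_neg hwj] at this
          simp only [Finset.mem_singleton] at this
          exact this.symm
    · rw [hns, hNint, hAc]

lemma inter_union_eq {α : Type*} [DecidableEq α] [Fintype α] {N A B : Finset α}
    (hA : A ⊆ N) (hB : B ⊆ Nᶜ) : N ∩ (A ∪ B) = A := by
  ext j
  simp only [Finset.mem_inter, Finset.mem_union]
  constructor
  · rintro ⟨hjN, hjA | hjB⟩
    · exact hjA
    · exact absurd hjN (Finset.mem_compl.mp (hB hjB))
  · intro hjA
    exact ⟨hA hjA, Or.inl hjA⟩

lemma sdiff_union_eq {α : Type*} [DecidableEq α] [Fintype α] {N A B : Finset α}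
    (hA : A ⊆ N) (hB : B ⊆ Nᶜ) : (A ∪ B) \ N = B := by
  ext j
  simp only [Finset.mem_sdiff, Finset.mem_union]
  constructor
  · rintro ⟨hjA | hjB, hjN⟩
    · exact absurd (hA hjA) hjN
    · exact hjB
  · intro hjB
    exact ⟨Or.inr hjB, Finset.mem_compl.mp (hB hjB)⟩

lemma card_inner (n r i : ℕ) (hi : i ≤ r) {w : Fin n → Option Bool} (hw : w ∈ Word n r) :
    ((Word n r).filter (fun w' => agrees w w' ∧ (noneSet w ∩ noneSet w').card = i)).card
      = r.choose i * (n - r).choose (r - i) * 2 ^ (r - i) := by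
  rw [mem_word_iff] at hw
  rw [pair_decomp n r i hi w, Finset.card_biUnion]
  · have hcards : ∀ q ∈ (noneSet w).powersetCard i ×ˢ ((noneSet w)ᶜ).powersetCard (r - i),
        (pairFiber w q.1 q.2).card = 2 ^ (r - i) := by
      rintro ⟨A, B⟩ hq
      simp only [Finset.mem_product, Finset.mem_powersetCard] at hq
      rw [card_pairFiber hq.1.1 hq.2.1, hq.1.2, hw]
    rw [Finset.sum_congr rfl hcards, Finset.sum_const, Finset.card_product,
      Finset.card_powersetCard, Finset.card_powersetCard, hw, Finset.card_compl,
      Fintype.card_fin, hw, smul_eq_mul]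
  · rintro ⟨A, B⟩ hq ⟨A', B'⟩ hq' hne
    simp only [Finset.mem_coe, Finset.mem_product, Finset.mem_powersetCard] at hq hq'
    rw [Function.onFun, Finset.disjoint_left]
    intro x hx hx'
    have h1 := noneSet_of_mem_pairFiber hx
    have h2 := noneSet_of_mem_pairFiber hx'
    apply hne
    have hU : A ∪ B = A' ∪ B' := h1 ▸ h2 ▸ rfl
    have hAA : A = A' := by
      rw [← inter_union_eq hq.1.1 hq.2.1, ← inter_union_eq hq'.1.1 hq'.2.1, hU]
    have hBB : B = B' := by
      rw [← sdiff_union_eq hq.1.1 hq.2.1, ← sdiff_union_eq hq'.1.1 hq'.2.1, hU]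
    rw [hAA, hBB]

lemma card_pairs (n r i : ℕ) (hi : i ≤ r) (hrn : r ≤ n) :
    (((Word n r) ×ˢ (Word n r)).filter
        (fun p => agrees p.1 p.2 ∧ (noneSet p.1 ∩ noneSet p.2).card = i)).card
      = n.choose r * 2 ^ (n - r) * (r.choose i * (n - r).choose (r - i) * 2 ^ (r - i)) := by
  rw [Finset.card_filter, Finset.sum_product]
  have : ∀ w ∈ Word n r,
      (∑ w' ∈ Word n r,
        if agrees w w' ∧ (noneSet w ∩ noneSet w').card = i then 1 else 0)
        = r.choose i * (n - r).choose (r - i) * 2 ^ (r - i) := by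
    intro w hw
    rw [← Finset.card_filter, card_inner n r i hi hw]
  rw [Finset.sum_congr rfl this, Finset.sum_const, smul_eq_mul, card_word n r hrn]

lemma Ex_expand (n r : ℕ) :
    Ex n (fun S => (Xr n r S : ℝ) ^ 2)
      = ∑ p ∈ (Word n r) ×ˢ (Word n r),
          (((univ : Finset (Finset (Fin n → Bool))).filter
            (fun S => cube p.1 ∪ cube p.2 ⊆ S)).card : ℝ)
            / (Fintype.card (Finset (Fin n → Bool))) := by
  have key : ∀ S : Finset (Fin n → Bool), ((Xr n r S : ℝ)) ^ 2
      = ∑ p ∈ (Word n r) ×ˢ (Word n r),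
          (if cube p.1 ∪ cube p.2 ⊆ S then (1:ℝ) else 0) := by
    intro S
    have h1 : ((Xr n r S : ℝ)) = ∑ w ∈ Word n r, (if cube w ⊆ S then (1:ℝ) else 0) := by
      rw [Xr, Finset.card_filter]
      push_cast
      rfl
    rw [h1, sq, Finset.sum_mul_sum, ← Finset.sum_product']
    apply Finset.sum_congr rfl
    rintro ⟨w, w'⟩ hp
    rw [ite_zero_mul_ite_zero]
    congr 1
    · simp [Finset.union_subset_iff]
    · norm_num
  rw [Ex]
  simp only [key]
  rw [Finset.sum_comm, Finset.sum_div]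
  apply Finset.sum_congr rfl
  intro p hp
  rw [Finset.card_filter]
  push_cast
  rfl

lemma natid (n r i : ℕ) (hi : i ≤ r) (h : 2 * r ≤ n) :
    n.choose r * 2 ^ (n - r) * (r.choose i * (n - r).choose (r - i) * 2 ^ (r - i))
      * (Nat.factorial i * Nat.factorial (r - i) * Nat.factorial (r - i)
        * Nat.factorial (n - 2 * r + i))
      = Nat.factorial n * 2 ^ (n - i) := by
  have h1 := Nat.choose_mul_factorial_mul_factorial hi
  have h2' : r - i ≤ n - r := by omega
  have h2 := Nat.choose_mul_factorial_mul_factorial h2'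
  have h3 : n - r - (r - i) = n - 2 * r + i := by omega
  rw [h3] at h2
  have h4 := Nat.choose_mul_factorial_mul_factorial (show r ≤ n by omega)
  have h5 : (2:ℕ) ^ (n - r) * 2 ^ (r - i) = 2 ^ (n - i) := by
    rw [← pow_add]; congr 1; omega
  calc n.choose r * 2 ^ (n - r) * (r.choose i * (n - r).choose (r - i) * 2 ^ (r - i))
      * (Nat.factorial i * Nat.factorial (r - i) * Nat.factorial (r - i)
        * Nat.factorial (n - 2 * r + i))
      = n.choose r * (r.choose i * Nat.factorial i * Nat.factorial (r - i))
        * ((n - r).choose (r - i) * Nat.factorial (r - i) * Nat.factorial (n - 2 * r + i))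
        * (2 ^ (n - r) * 2 ^ (r - i)) := by ring
    _ = n.choose r * Nat.factorial r * Nat.factorial (n - r) * 2 ^ (n - i) := by
        rw [h1, h2, h5]
    _ = Nat.factorial n * 2 ^ (n - i) := by rw [h4]

end Helpers

open Nat in
/-- Thanatipanonda's formula for the second moment of the number of
`r`-dimensional subcubes contained in a uniformly random subset of `{0,1}^n`. -/
theorem second_moment_Xr (n r : ℕ) (h : 2 * r ≤ n) :
    Ex n (fun S => (Xr n r S : ℝ) ^ 2)
      = (∑ i ∈ Finset.range (r + 1),
          (n ! : ℝ) * 2 ^ (n - i)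
            / ((i ! : ℝ) * ((r - i)! : ℝ) ^ 2 * ((n - 2 * r + i)! : ℝ) * 2 ^ (2 ^ (r + 1)))
            * (2 ^ (2 ^ i) - 1))
        + ((n.choose r : ℝ) * 2 ^ (n - r)) ^ 2 / 2 ^ (2 ^ (r + 1)) := by
  have hrn : r ≤ n := by omega
  have hcard : Fintype.card (Fin n → Bool) = 2 ^ n := by simp
  have hD : (Fintype.card (Finset (Fin n → Bool)) : ℝ) = 2 ^ (2 ^ n) := by
    rw [Fintype.card_finset, hcard]; push_cast; ring
  rw [Ex_expand]
  have step1 : ∀ p ∈ (Word n r) ×ˢ (Word n r),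
      (((univ : Finset (Finset (Fin n → Bool))).filter
        (fun S => cube p.1 ∪ cube p.2 ⊆ S)).card : ℝ)
        / (Fintype.card (Finset (Fin n → Bool)))
      = (2:ℝ) ^ ((cube p.1 ∩ cube p.2).card) / 2 ^ (2 ^ (r + 1)) := by
    rintro ⟨w, w'⟩ hp
    rw [Finset.mem_product] at hp
    rw [count_supersets, hD, hcard]
    have hu : (cube w ∪ cube w').card + (cube w ∩ cube w').card = 2 ^ (r + 1) := by
      rw [Finset.card_union_add_card_inter, card_cube, card_cube,
        mem_word_iff.mp hp.1, mem_word_iff.mp hp.2]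
      ring
    have hle : (cube w ∪ cube w').card ≤ 2 ^ n := by
      have := Finset.card_le_univ (cube w ∪ cube w')
      rwa [hcard] at this
    rw [div_eq_div_iff (by positivity) (by positivity)]
    push_cast
    rw [← pow_add, ← pow_add]
    congr 1
    omega
  rw [Finset.sum_congr rfl step1, ← Finset.sum_div]
  have split : (∑ p ∈ (Word n r) ×ˢ (Word n r), (2:ℝ) ^ ((cube p.1 ∩ cube p.2).card))
      = (∑ i ∈ Finset.range (r + 1),
          ((n.choose r * 2 ^ (n - r) * (r.choose i * (n - r).choose (r - i) * 2 ^ (r - i)) : ℕ) : ℝ)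
            * (2 ^ (2 ^ i) - 1))
        + (((n.choose r : ℝ)) * 2 ^ (n - r)) ^ 2 := by
    have e0 : ∀ p ∈ (Word n r) ×ˢ (Word n r),
        (2:ℝ) ^ ((cube p.1 ∩ cube p.2).card)
          = ((2:ℝ) ^ ((cube p.1 ∩ cube p.2).card) - 1) + 1 := by
      intro p _; ring
    rw [Finset.sum_congr rfl e0, Finset.sum_add_distrib, Finset.sum_const,
      Finset.card_product, card_word n r hrn]
    congr 1
    · -- the sum of (2^m - 1) terms
      rw [← Finset.sum_filter_add_sum_filter_not ((Word n r) ×ˢ (Word n r))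
        (fun p => agrees p.1 p.2)]
      have z : ∀ p ∈ ((Word n r) ×ˢ (Word n r)).filter (fun p => ¬ agrees p.1 p.2),
          ((2:ℝ) ^ ((cube p.1 ∩ cube p.2).card) - 1) = 0 := by
        intro p hp
        rw [Finset.mem_filter] at hp
        rw [card_cube_inter_of_not _ _ hp.2]
        norm_num
      rw [Finset.sum_congr rfl z, Finset.sum_const_zero, add_zero]
      have maps : ∀ p ∈ ((Word n r) ×ˢ (Word n r)).filter (fun p => agrees p.1 p.2),
          (noneSet p.1 ∩ noneSet p.2).card ∈ Finset.range (r + 1) := by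
        intro p hp
        rw [Finset.mem_filter, Finset.mem_product] at hp
        rw [Finset.mem_range, Nat.lt_succ_iff]
        calc (noneSet p.1 ∩ noneSet p.2).card ≤ (noneSet p.1).card :=
              Finset.card_le_card Finset.inter_subset_left
          _ = r := mem_word_iff.mp hp.1.1
      rw [← Finset.sum_fiberwise_of_maps_to maps
        (fun p => (2:ℝ) ^ ((cube p.1 ∩ cube p.2).card) - 1)]
      apply Finset.sum_congr rfl
      intro i hi
      rw [Finset.mem_range, Nat.lt_succ_iff] at hi
      have e1 : ∀ p ∈ (((Word n r) ×ˢ (Word n r)).filter (fun p => agrees p.1 p.2)).filter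
          (fun p => (noneSet p.1 ∩ noneSet p.2).card = i),
          ((2:ℝ) ^ ((cube p.1 ∩ cube p.2).card) - 1) = (2:ℝ) ^ (2 ^ i) - 1 := by
        intro p hp
        simp only [Finset.mem_filter] at hp
        rw [card_cube_inter _ _ hp.1.2, hp.2]
      rw [Finset.sum_congr rfl e1, Finset.sum_const, Finset.filter_filter,
        card_pairs n r i hi hrn, nsmul_eq_mul]
    · push_cast
      ring
  rw [split]
  rw [_root_.add_div, Finset.sum_div]
  congr 1
  apply Finset.sum_congr rfl
  intro i hi
  rw [Finset.mem_range, Nat.lt_succ_iff] at hi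
  have hMi : ((n.choose r * 2 ^ (n - r) * (r.choose i * (n - r).choose (r - i) * 2 ^ (r - i)) : ℕ) : ℝ)
      * ((i ! : ℝ) * ((r - i)! : ℝ) ^ 2 * ((n - 2 * r + i)! : ℝ))
      = (n ! : ℝ) * 2 ^ (n - i) := by
    have hnat := natid n r i hi h
    calc ((n.choose r * 2 ^ (n - r) * (r.choose i * (n - r).choose (r - i) * 2 ^ (r - i)) : ℕ) : ℝ)
        * ((i ! : ℝ) * ((r - i)! : ℝ) ^ 2 * ((n - 2 * r + i)! : ℝ))
        = ((n.choose r * 2 ^ (n - r) * (r.choose i * (n - r).choose (r - i) * 2 ^ (r - i))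
            * (Nat.factorial i * Nat.factorial (r - i) * Nat.factorial (r - i)
              * Nat.factorial (n - 2 * r + i)) : ℕ) : ℝ) := by push_cast; ring
      _ = ((Nat.factorial n * 2 ^ (n - i) : ℕ) : ℝ) := by rw [hnat]
      _ = (n ! : ℝ) * 2 ^ (n - i) := by push_cast; ring
  have hd : (0:ℝ) < (i ! : ℝ) * ((r - i)! : ℝ) ^ 2 * ((n - 2 * r + i)! : ℝ) := by
    have a1 : (0:ℝ) < (i ! : ℝ) := by exact_mod_cast i.factorial_pos
    have a2 : (0:ℝ) < ((r - i)! : ℝ) := by exact_mod_cast (r - i).factorial_pos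
    have a3 : (0:ℝ) < ((n - 2 * r + i)! : ℝ) := by exact_mod_cast (n - 2 * r + i).factorial_pos
    positivity
  have hDpos : (0:ℝ) < 2 ^ (2 ^ (r + 1)) := by positivity
  have hM' : ((n.choose r * 2 ^ (n - r) * (r.choose i * (n - r).choose (r - i) * 2 ^ (r - i)) : ℕ) : ℝ)
      = (n ! : ℝ) * 2 ^ (n - i) / ((i ! : ℝ) * ((r - i)! : ℝ) ^ 2 * ((n - 2 * r + i)! : ℝ)) := by
    rw [eq_div_iff (ne_of_gt hd)]
    exact hMi
  rw [hM']
  field_simp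
end

section
/- For a uniformly random subset S of {0,1}^n with n ≥ 1, the number X_1 of edges (1-dimensional subcubes) contained in S has third moment E[X_1³] = 2^n · n² · ((2^n)² n + 12·2^n·n + 6·2^n + 24 n) / 512. -/
open Finset

namespace TM

variable {n : ℕ}

lemma mem_cube {w : Fin n → Option Bool} {x : Fin n → Bool} :
    x ∈ cube w ↔ ∀ i b, w i = some b → x i = b := by
  simp [cube]

lemma mem_word {w : Fin n → Option Bool} {r : ℕ} :
    w ∈ Word n r ↔ (Finset.univ.filter fun i => w i = none).card = r := by
  simp [Word]

lemma exists_free {w : Fin n → Option Bool} (hw : w ∈ Word n 1) :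
    ∃ i, ∀ j, w j = none ↔ j = i := by
  rw [mem_word, Finset.card_eq_one] at hw
  obtain ⟨i, hi⟩ := hw
  refine ⟨i, fun j => ?_⟩
  constructor
  · intro h
    have : j ∈ Finset.univ.filter fun i => w i = none := by simp [h]
    rw [hi] at this; simpa using this
  · intro h
    have : i ∈ Finset.univ.filter fun i => w i = none := by rw [hi]; simp
    simp at this; rw [h]; exact this

/-- the two endpoints of an edge -/
def pt (w : Fin n → Option Bool) (b : Bool) : Fin n → Bool := fun j => (w j).getD b

lemma pt_mem (w : Fin n → Option Bool) (b : Bool) : pt w b ∈ cube w := by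
  rw [mem_cube]; intro i c h; simp [pt, h]

lemma mem_cube_iff_pt {w : Fin n → Option Bool} {i : Fin n}
    (hi : ∀ j, w j = none ↔ j = i) {x : Fin n → Bool} :
    x ∈ cube w ↔ x = pt w (x i) := by
  constructor
  · intro hx
    funext j
    by_cases h : j = i
    · subst h; simp [pt, (hi j).2 rfl]
    · obtain ⟨c, hc⟩ : ∃ c, w j = some c := by
        cases hwj : w j with
        | none => exact absurd ((hi j).1 hwj) h
        | some c => exact ⟨c, rfl⟩
      rw [mem_cube] at hx
      simp [pt, hc, hx j c hc]
  · intro h; rw [h]; exact pt_mem w (x i)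

lemma pt_apply_free {w : Fin n → Option Bool} {i : Fin n} (hi : w i = none) (b : Bool) :
    pt w b i = b := by simp [pt, hi]

lemma pt_apply_ne {w : Fin n → Option Bool} {j : Fin n} {c : Bool} (hj : w j = some c)
    (b : Bool) : pt w b j = c := by simp [pt, hj]

lemma eq_of_mem_agree {w : Fin n → Option Bool} {i : Fin n}
    (hi : ∀ j, w j = none ↔ j = i) {x y : Fin n → Bool}
    (hx : x ∈ cube w) (hy : y ∈ cube w) (h : x i = y i) : x = y := by
  rw [mem_cube_iff_pt hi] at hx hy
  rw [hx, hy, h]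

lemma agree_off_free {w : Fin n → Option Bool} {i : Fin n}
    (hi : ∀ j, w j = none ↔ j = i) {x y : Fin n → Bool}
    (hx : x ∈ cube w) (hy : y ∈ cube w) {j : Fin n} (hj : j ≠ i) : x j = y j := by
  obtain ⟨c, hc⟩ : ∃ c, w j = some c := by
    cases hwj : w j with
    | none => exact absurd ((hi j).1 hwj) hj
    | some c => exact ⟨c, rfl⟩
  rw [mem_cube] at hx hy
  rw [hx j c hc, hy j c hc]

lemma word_determined {w v : Fin n → Option Bool} (hw : w ∈ Word n 1) (hv : v ∈ Word n 1)
    {x y : Fin n → Bool} (hxy : x ≠ y)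
    (hxw : x ∈ cube w) (hyw : y ∈ cube w) (hxv : x ∈ cube v) (hyv : y ∈ cube v) :
    w = v := by
  obtain ⟨i, hi⟩ := exists_free hw
  obtain ⟨i', hi'⟩ := exists_free hv
  have hxyi : x i ≠ y i := fun h => hxy (eq_of_mem_agree hi hxw hyw h)
  have hii' : i = i' := by
    by_contra h
    exact hxyi (agree_off_free hi' hxv hyv h)
  subst hii'
  funext j
  by_cases h : j = i
  · subst h; rw [(hi j).2 rfl, (hi' j).2 rfl]
  · obtain ⟨c, hc⟩ : ∃ c, w j = some c := by
      cases hwj : w j with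
      | none => exact absurd ((hi j).1 hwj) h
      | some c => exact ⟨c, rfl⟩
    obtain ⟨c', hc'⟩ : ∃ c', v j = some c' := by
      cases hvj : v j with
      | none => exact absurd ((hi' j).1 hvj) h
      | some c => exact ⟨c, rfl⟩
    rw [mem_cube] at hxw hxv
    rw [hc, hc', (hxw j c hc).symm.trans (hxv j c' hc')]

lemma pt_ne {w : Fin n → Option Bool} (hw : w ∈ Word n 1) :
    pt w false ≠ pt w true := by
  obtain ⟨i, hi⟩ := exists_free hw
  intro h
  have := congrFun h i
  rw [pt_apply_free ((hi i).2 rfl), pt_apply_free ((hi i).2 rfl)] at this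
  exact Bool.false_ne_true this

lemma cube_eq_pair {w : Fin n → Option Bool} (hw : w ∈ Word n 1) :
    cube w = {pt w false, pt w true} := by
  obtain ⟨i, hi⟩ := exists_free hw
  ext x
  simp only [Finset.mem_insert, Finset.mem_singleton]
  rw [mem_cube_iff_pt hi]
  constructor
  · intro h; cases hxi : x i
    · left; rw [h, hxi]
    · right; rw [h, hxi]
  · rintro (h | h) <;> rw [h]
    · rw [pt_apply_free ((hi i).2 rfl)]
    · rw [pt_apply_free ((hi i).2 rfl)]

lemma cube_card {w : Fin n → Option Bool} (hw : w ∈ Word n 1) :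
    (cube w).card = 2 := by
  rw [cube_eq_pair hw, Finset.card_insert_of_notMem (by simp [pt_ne hw]),
    Finset.card_singleton]

lemma cube_eq_of_mem {w : Fin n → Option Bool} (hw : w ∈ Word n 1)
    {x y : Fin n → Bool} (hx : x ∈ cube w) (hy : y ∈ cube w) (hxy : x ≠ y) :
    cube w = {x, y} := by
  refine (Finset.eq_of_subset_of_card_le ?_ ?_).symm
  · intro z hz
    simp only [Finset.mem_insert, Finset.mem_singleton] at hz
    rcases hz with h | h <;> [rw [h]; rw [h]] <;> assumption
  · rw [cube_card hw, Finset.card_insert_of_notMem (by simp [hxy]), Finset.card_singleton]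

lemma inter_card_le_one {w v : Fin n → Option Bool} (hw : w ∈ Word n 1) (hv : v ∈ Word n 1)
    (hwv : w ≠ v) : (cube w ∩ cube v).card ≤ 1 := by
  by_contra h
  push_neg at h
  obtain ⟨x, hx, y, hy, hxy⟩ := Finset.one_lt_card.1 h
  simp only [Finset.mem_inter] at hx hy
  exact hwv (word_determined hw hv hxy hx.1 hy.1 hx.2 hy.2)

lemma cube_inj {w v : Fin n → Option Bool} (hw : w ∈ Word n 1) (hv : v ∈ Word n 1)
    (h : cube w = cube v) : w = v := by
  by_contra hne
  have h2 : (cube w ∩ cube v).card ≤ 1 := inter_card_le_one hw hv hne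
  rw [← h, Finset.inter_self, cube_card hw] at h2
  omega

end TM
namespace TM
variable {n : ℕ}

/-- the word that is `none` at `i` and matches `x` elsewhere -/
def wAt (x : Fin n → Bool) (i : Fin n) : Fin n → Option Bool :=
  fun j => if j = i then none else some (x j)

lemma wAt_mem_word (x : Fin n → Bool) (i : Fin n) : wAt x i ∈ Word n 1 := by
  rw [mem_word]
  have : (Finset.univ.filter fun j => wAt x i j = none) = {i} := by
    ext j; simp [wAt]
  rw [this, Finset.card_singleton]

lemma mem_cube_wAt (x : Fin n → Bool) (i : Fin n) : x ∈ cube (wAt x i) := by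
  rw [mem_cube]; intro j b h
  simp only [wAt] at h
  split_ifs at h with h'
  exact Option.some_inj.1 h

lemma card_through (x : Fin n → Bool) :
    ((Word n 1).filter fun w => x ∈ cube w).card = n := by
  have h : ((Finset.univ : Finset (Fin n))).card
      = ((Word n 1).filter fun w => x ∈ cube w).card := by
    apply Finset.card_bij (fun (i : Fin n) _ => wAt x i)
    · intro i _
      simp only [Finset.mem_filter]
      exact ⟨wAt_mem_word x i, mem_cube_wAt x i⟩
    · intro i _ i' _ h
      have := congrFun h i
      simp only [wAt, if_pos rfl] at this
      by_contra hne
      rw [if_neg (fun hh => hne hh)] at this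
      simp at this
    · intro w hw
      simp only [Finset.mem_filter] at hw
      obtain ⟨hw1, hx⟩ := hw
      obtain ⟨i, hi⟩ := exists_free hw1
      refine ⟨i, Finset.mem_univ i, ?_⟩
      funext j
      by_cases h : j = i
      · subst h; simp [wAt, (hi j).2 rfl]
      · obtain ⟨c, hc⟩ : ∃ c, w j = some c := by
          cases hwj : w j with
          | none => exact absurd ((hi j).1 hwj) h
          | some c => exact ⟨c, rfl⟩
        rw [mem_cube] at hx
        simp [wAt, h, hc, hx j c hc]
  simpa using h.symm

lemma card_word : (Word n 1).card * 2 = n * 2 ^ n := by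
  have key : ∑ w ∈ Word n 1, (cube w).card
      = ∑ x : Fin n → Bool, ((Word n 1).filter fun w => x ∈ cube w).card := by
    simp only [Finset.card_eq_sum_ones, Finset.sum_filter]
    rw [Finset.sum_comm]
    congr 1
    ext w
    rw [Finset.sum_ite_mem, Finset.univ_inter]
  have l : ∑ w ∈ Word n 1, (cube w).card = (Word n 1).card * 2 := by
    rw [Finset.sum_congr rfl (fun w hw => cube_card hw), Finset.sum_const, smul_eq_mul]
  have r : ∑ x : Fin n → Bool, ((Word n 1).filter fun w => x ∈ cube w).card
      = 2 ^ n * n := by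
    rw [Finset.sum_congr rfl (fun x _ => card_through x), Finset.sum_const, smul_eq_mul,
      Finset.card_univ]
    simp [Fintype.card_fun]
  rw [← l, key, r]; ring

lemma card_word' (hn : 1 ≤ n) : (Word n 1).card = n * 2 ^ (n - 1) := by
  have := card_word (n := n)
  have h2 : 2 ^ n = 2 ^ (n - 1) * 2 := by
    rw [← pow_succ]; congr 1; omega
  rw [h2] at this
  have : (Word n 1).card * 2 = n * 2 ^ (n - 1) * 2 := by rw [this]; ring
  omega

lemma adj_count {w : Fin n → Option Bool} (hw : w ∈ Word n 1) :
    ((Word n 1).filter fun v => v ≠ w ∧ (cube w ∩ cube v).Nonempty).card = 2 * (n - 1) := by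
  classical
  set p := pt w false with hp
  set q := pt w true with hq
  have hpq : p ≠ q := pt_ne hw
  have hpm : p ∈ cube w := pt_mem w false
  have hqm : q ∈ cube w := pt_mem w true
  set Fp := (Word n 1).filter fun v => p ∈ cube v with hFp
  set Fq := (Word n 1).filter fun v => q ∈ cube v with hFq
  have hFpc : Fp.card = n := card_through p
  have hFqc : Fq.card = n := card_through q
  have hint : Fp ∩ Fq = {w} := by
    ext v
    simp only [Finset.mem_inter, hFp, hFq, Finset.mem_filter, Finset.mem_singleton]
    constructor
    · rintro ⟨⟨hv, hpv⟩, ⟨_, hqv⟩⟩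
      exact word_determined hv hw hpq hpv hqv hpm hqm
    · rintro rfl
      exact ⟨⟨hw, hpm⟩, ⟨hw, hqm⟩⟩
  have hunion : (Fp ∪ Fq).card = 2 * n - 1 := by
    have := Finset.card_union_add_card_inter Fp Fq
    rw [hint, hFpc, hFqc, Finset.card_singleton] at this
    omega
  have hweq : ((Word n 1).filter fun v => v ≠ w ∧ (cube w ∩ cube v).Nonempty)
      = (Fp ∪ Fq).erase w := by
    ext v
    simp only [Finset.mem_erase, Finset.mem_union, hFp, hFq, Finset.mem_filter]
    constructor
    · rintro ⟨hv, hne, z, hz⟩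
      rw [Finset.mem_inter] at hz
      have : z ∈ cube w := hz.1
      rw [cube_eq_pair hw] at this
      simp only [Finset.mem_insert, Finset.mem_singleton] at this
      refine ⟨hne, ?_⟩
      rcases this with h | h
      · left; refine ⟨hv, ?_⟩; rw [hp, ← h]; exact hz.2
      · right; refine ⟨hv, ?_⟩; rw [hq, ← h]; exact hz.2

    · rintro ⟨hne, (⟨hv, hmem⟩ | ⟨hv, hmem⟩)⟩
      · exact ⟨hv, hne, p, Finset.mem_inter.2 ⟨hpm, hmem⟩⟩
      · exact ⟨hv, hne, q, Finset.mem_inter.2 ⟨hqm, hmem⟩⟩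
  have hwin : w ∈ Fp ∪ Fq := Finset.mem_union_left _ (by simp [hFp, hw, hpm])
  rw [hweq, Finset.card_erase_of_mem hwin, hunion]
  have hn : 1 ≤ n := by
    by_contra h
    interval_cases n
    · rw [mem_word] at hw; simp at hw
  omega

end TM
namespace TM
variable {n : ℕ}

lemma bool_flip : ∀ a b : Bool, a ≠ b → b = !a := by decide

lemma differ_at_free {w : Fin n → Option Bool} {i : Fin n}
    (hi : ∀ j, w j = none ↔ j = i) {x y : Fin n → Bool}
    (hx : x ∈ cube w) (hy : y ∈ cube w) (hxy : x ≠ y) : x i ≠ y i := by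
  intro h; exact hxy (eq_of_mem_agree hi hx hy h)

lemma free_ne_of_adj {w1 w2 : Fin n → Option Bool} (hw1 : w1 ∈ Word n 1)
    (hw2 : w2 ∈ Word n 1) (hne : w1 ≠ w2) {i1 i2 : Fin n}
    (hi1 : ∀ j, w1 j = none ↔ j = i1) (hi2 : ∀ j, w2 j = none ↔ j = i2)
    {x : Fin n → Bool} (hx1 : x ∈ cube w1) (hx2 : x ∈ cube w2) : i1 ≠ i2 := by
  intro h
  subst h
  apply hne
  funext j
  by_cases hj : j = i1
  · subst hj; rw [(hi1 j).2 rfl, (hi2 j).2 rfl]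
  · obtain ⟨c, hc⟩ : ∃ c, w1 j = some c := by
      cases hwj : w1 j with
      | none => exact absurd ((hi1 j).1 hwj) hj
      | some c => exact ⟨c, rfl⟩
    obtain ⟨c', hc'⟩ : ∃ c', w2 j = some c' := by
      cases hwj : w2 j with
      | none => exact absurd ((hi2 j).1 hwj) hj
      | some c => exact ⟨c, rfl⟩
    rw [mem_cube] at hx1 hx2
    rw [hc, hc', (hx1 j c hc).symm.trans (hx2 j c' hc')]

lemma two_le_of_adj {w1 w2 : Fin n → Option Bool} (hw1 : w1 ∈ Word n 1)
    (hw2 : w2 ∈ Word n 1) (hne : w1 ≠ w2)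
    (hmeet : (cube w1 ∩ cube w2).Nonempty) : 2 ≤ n := by
  obtain ⟨x, hx⟩ := hmeet
  rw [Finset.mem_inter] at hx
  obtain ⟨i1, hi1⟩ := exists_free hw1
  obtain ⟨i2, hi2⟩ := exists_free hw2
  have := free_ne_of_adj hw1 hw2 hne hi1 hi2 hx.1 hx.2
  have h1 : (i1 : ℕ) < n := i1.isLt
  have h2 : (i2 : ℕ) < n := i2.isLt
  have : (i1 : ℕ) ≠ (i2 : ℕ) := fun h => this (Fin.ext h)
  omega

lemma triangle {w1 w2 w3 : Fin n → Option Bool} (hw1 : w1 ∈ Word n 1)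
    (hw2 : w2 ∈ Word n 1) (hw3 : w3 ∈ Word n 1)
    (h12 : w1 ≠ w2) (h13 : w1 ≠ w3) (h23 : w2 ≠ w3)
    {x : Fin n → Bool} (hx1 : x ∈ cube w1) (hx2 : x ∈ cube w2)
    (m13 : (cube w1 ∩ cube w3).Nonempty) (m23 : (cube w2 ∩ cube w3).Nonempty) :
    x ∈ cube w3 := by
  obtain ⟨u, hu⟩ := m13
  obtain ⟨z, hz⟩ := m23
  rw [Finset.mem_inter] at hu hz
  by_cases hux : u = x
  · rw [← hux]; exact hu.2
  by_cases hzx : z = x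
  · rw [← hzx]; exact hz.2
  exfalso
  have huz : u ≠ z := by
    intro h
    subst h
    have hcard := inter_card_le_one hw1 hw2 h12
    have hmem1 : x ∈ cube w1 ∩ cube w2 := Finset.mem_inter.2 ⟨hx1, hx2⟩
    have hmem2 : u ∈ cube w1 ∩ cube w2 := Finset.mem_inter.2 ⟨hu.1, hz.1⟩
    exact hux (Finset.card_le_one.1 hcard u hmem2 x hmem1)
  obtain ⟨i1, hi1⟩ := exists_free hw1
  obtain ⟨i2, hi2⟩ := exists_free hw2
  obtain ⟨i3, hi3⟩ := exists_free hw3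
  -- x, u differ exactly at i1
  have dxu : x i1 ≠ u i1 := differ_at_free hi1 hx1 hu.1 (fun h => hux h.symm)
  have axu : ∀ j, j ≠ i1 → x j = u j := fun j hj => agree_off_free hi1 hx1 hu.1 hj
  have dxz : x i2 ≠ z i2 := differ_at_free hi2 hx2 hz.1 (fun h => hzx h.symm)
  have axz : ∀ j, j ≠ i2 → x j = z j := fun j hj => agree_off_free hi2 hx2 hz.1 hj
  have auz : ∀ j, j ≠ i3 → u j = z j := fun j hj => agree_off_free hi3 hu.2 hz.2 hj
  have hi12 : i1 ≠ i2 := by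
    intro h
    subst h
    apply huz
    funext j
    by_cases hj : j = i1
    · subst hj
      rw [bool_flip _ _ dxu, bool_flip _ _ dxz]
    · rw [← axu j hj, axz j hj]
  -- u, z differ at i1 and at i2, but agree off i3 : contradiction
  have d1 : u i1 ≠ z i1 := by
    rw [← axz i1 hi12]
    intro h; exact dxu h.symm
  have d2 : u i2 ≠ z i2 := by
    rw [axu i2 (Ne.symm hi12)] at dxz
    exact dxz
  have e1 : i1 = i3 := by
    by_contra h; exact d1 (auz i1 h)
  have e2 : i2 = i3 := by
    by_contra h; exact d2 (auz i2 h)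
  exact hi12 (e1.trans e2.symm)

lemma star_count {w1 w2 : Fin n → Option Bool} (hw1 : w1 ∈ Word n 1)
    (hw2 : w2 ∈ Word n 1) (hne : w1 ≠ w2) {x : Fin n → Bool}
    (hx1 : x ∈ cube w1) (hx2 : x ∈ cube w2) :
    ((Word n 1).filter fun v =>
      (v ≠ w1 ∧ (cube w1 ∩ cube v).Nonempty) ∧ (v ≠ w2 ∧ (cube w2 ∩ cube v).Nonempty)).card
      = n - 2 := by
  have hset : ((Word n 1).filter fun v =>
      (v ≠ w1 ∧ (cube w1 ∩ cube v).Nonempty) ∧ (v ≠ w2 ∧ (cube w2 ∩ cube v).Nonempty))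
      = ((Word n 1).filter fun v => x ∈ cube v) \ {w1, w2} := by
    ext v
    simp only [Finset.mem_filter, Finset.mem_sdiff, Finset.mem_insert, Finset.mem_singleton]
    constructor
    · rintro ⟨hv, ⟨hne1, m1⟩, ⟨hne2, m2⟩⟩
      refine ⟨⟨hv, ?_⟩, ?_⟩
      · exact triangle hw1 hw2 hv hne (Ne.symm hne1) (Ne.symm hne2) hx1 hx2 m1 m2
      · push_neg; exact ⟨Ne.symm (Ne.symm hne1), Ne.symm (Ne.symm hne2)⟩
    · rintro ⟨⟨hv, hxv⟩, hnot⟩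
      push_neg at hnot
      exact ⟨hv, ⟨hnot.1, ⟨x, Finset.mem_inter.2 ⟨hx1, hxv⟩⟩⟩,
        ⟨hnot.2, ⟨x, Finset.mem_inter.2 ⟨hx2, hxv⟩⟩⟩⟩
  rw [hset, Finset.card_sdiff_of_subset]
  · rw [card_through, Finset.card_insert_of_notMem (by simp [hne]), Finset.card_singleton]
  · intro v hv
    simp only [Finset.mem_insert, Finset.mem_singleton] at hv
    rcases hv with h | h <;> subst h <;> simp only [Finset.mem_filter]
    · exact ⟨hw1, hx1⟩
    · exact ⟨hw2, hx2⟩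

end TM
namespace TM
variable {n : ℕ}

noncomputable def ai (w v : Fin n → Option Bool) : ℝ :=
  if w ≠ v ∧ (cube w ∩ cube v).Nonempty then 1 else 0

noncomputable def ei (w v : Fin n → Option Bool) : ℝ :=
  if w = v then 1 else 0

lemma ai_self (w : Fin n → Option Bool) : ai w w = 0 := by simp [ai]

lemma ai_comm (w v : Fin n → Option Bool) : ai w v = ai v w := by
  simp only [ai, Finset.inter_comm, ne_comm]

lemma ai_of_meet {w v : Fin n → Option Bool} (hne : w ≠ v)
    (h : (cube w ∩ cube v).Nonempty) : ai w v = 1 := by simp [ai, hne, h]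

lemma ai_of_not_meet {w v : Fin n → Option Bool}
    (h : ¬(cube w ∩ cube v).Nonempty) : ai w v = 0 := by simp [ai, h]

lemma ei_self (w : Fin n → Option Bool) : ei w w = 1 := by simp [ei]

lemma ei_of_ne {w v : Fin n → Option Bool} (h : w ≠ v) : ei w v = 0 := by simp [ei, h]

lemma pair_card_of_ne {w v : Fin n → Option Bool} (hw : w ∈ Word n 1) (hv : v ∈ Word n 1)
    (hne : w ≠ v) :
    (cube w ∩ cube v).card = if (cube w ∩ cube v).Nonempty then 1 else 0 := by
  have h1 := inter_card_le_one hw hv hne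
  split_ifs with h
  · have := Finset.Nonempty.card_pos h
    omega
  · rw [Finset.not_nonempty_iff_eq_empty] at h
    rw [h, Finset.card_empty]

lemma triple_card_of_all_meet {w1 w2 w3 : Fin n → Option Bool} (hw1 : w1 ∈ Word n 1)
    (hw2 : w2 ∈ Word n 1) (hw3 : w3 ∈ Word n 1)
    (h12 : w1 ≠ w2) (h13 : w1 ≠ w3) (h23 : w2 ≠ w3)
    (m12 : (cube w1 ∩ cube w2).Nonempty) (m13 : (cube w1 ∩ cube w3).Nonempty)
    (m23 : (cube w2 ∩ cube w3).Nonempty) :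
    (cube w1 ∩ cube w2 ∩ cube w3).card = 1 := by
  obtain ⟨x, hx⟩ := m12
  rw [Finset.mem_inter] at hx
  have hx3 : x ∈ cube w3 := triangle hw1 hw2 hw3 h12 h13 h23 hx.1 hx.2 m13 m23
  have hne : (cube w1 ∩ cube w2 ∩ cube w3).Nonempty :=
    ⟨x, by rw [Finset.mem_inter, Finset.mem_inter]; exact ⟨⟨hx.1, hx.2⟩, hx3⟩⟩
  have hle : (cube w1 ∩ cube w2 ∩ cube w3).card ≤ (cube w1 ∩ cube w2).card :=
    Finset.card_le_card Finset.inter_subset_left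
  have h1 := inter_card_le_one hw1 hw2 h12
  have := Finset.Nonempty.card_pos hne
  omega

lemma gid {w1 w2 w3 : Fin n → Option Bool} (hw1 : w1 ∈ Word n 1)
    (hw2 : w2 ∈ Word n 1) (hw3 : w3 ∈ Word n 1) :
    (2:ℝ) ^ ((cube w1 ∩ cube w2).card + (cube w1 ∩ cube w3).card + (cube w2 ∩ cube w3).card)
      / 2 ^ ((cube w1 ∩ cube w2 ∩ cube w3).card)
    = 1 + ai w1 w2 + ai w1 w3 + ai w2 w3
        + ai w1 w2 * ai w1 w3 + ai w1 w2 * ai w2 w3 + ai w1 w3 * ai w2 w3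
        - 3 * (ai w1 w2 * (ai w1 w3 * ai w2 w3))
        + 3 * ei w1 w2 + 3 * ei w1 w3 + 3 * ei w2 w3
        + ei w1 w2 * ai w1 w3 + ei w1 w3 * ai w1 w2 + ei w2 w3 * ai w1 w2
        + 6 * (ei w1 w2 * ei w1 w3) := by
  by_cases h12 : w1 = w2
  · subst h12
    by_cases h13 : w1 = w3
    · subst h13
      simp only [Finset.inter_self, cube_card hw1, ai_self, ei_self]
      norm_num
    · have hc12 : cube w1 ∩ cube w1 = cube w1 := Finset.inter_self _
      rw [hc12, cube_card hw1, pair_card_of_ne hw1 hw3 h13]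
      rw [ai_self, ei_self, ei_of_ne h13]
      by_cases m : (cube w1 ∩ cube w3).Nonempty
      · rw [if_pos m, ai_of_meet h13 m]; norm_num
      · rw [if_neg m, ai_of_not_meet m]; norm_num
  · by_cases h13 : w1 = w3
    · subst h13
      have hc : cube w1 ∩ cube w2 ∩ cube w1 = cube w1 ∩ cube w2 := by
        rw [Finset.inter_comm (cube w1) (cube w2), Finset.inter_assoc, Finset.inter_self,
          Finset.inter_comm]
      have hc23 : cube w2 ∩ cube w1 = cube w1 ∩ cube w2 := Finset.inter_comm _ _
      rw [hc, hc23, Finset.inter_self, cube_card hw1, pair_card_of_ne hw1 hw2 h12]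
      rw [ai_self, ei_self, ei_of_ne h12, ei_of_ne (fun h => h12 h.symm),
        ai_comm w2 w1]
      by_cases m : (cube w1 ∩ cube w2).Nonempty
      · rw [if_pos m, ai_of_meet h12 m]; norm_num
      · rw [if_neg m, ai_of_not_meet m]; norm_num
    · by_cases h23 : w2 = w3
      · subst h23
        have hc : cube w1 ∩ cube w2 ∩ cube w2 = cube w1 ∩ cube w2 := by
          rw [Finset.inter_assoc, Finset.inter_self]
        rw [hc, Finset.inter_self, cube_card hw2, pair_card_of_ne hw1 hw2 h12]
        rw [ai_self, ei_self, ei_of_ne h12]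
        by_cases m : (cube w1 ∩ cube w2).Nonempty
        · rw [if_pos m, ai_of_meet h12 m]; norm_num
        · rw [if_neg m, ai_of_not_meet m]; norm_num
      · -- all distinct
        rw [ei_of_ne h12, ei_of_ne h13, ei_of_ne h23]
        rw [pair_card_of_ne hw1 hw2 h12, pair_card_of_ne hw1 hw3 h13,
          pair_card_of_ne hw2 hw3 h23]
        by_cases m12 : (cube w1 ∩ cube w2).Nonempty
        · by_cases m13 : (cube w1 ∩ cube w3).Nonempty
          · by_cases m23 : (cube w2 ∩ cube w3).Nonempty
            · rw [triple_card_of_all_meet hw1 hw2 hw3 h12 h13 h23 m12 m13 m23]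
              rw [if_pos m12, if_pos m13, if_pos m23, ai_of_meet h12 m12,
                ai_of_meet h13 m13, ai_of_meet h23 m23]
              norm_num
            · have ht : cube w1 ∩ cube w2 ∩ cube w3 = ∅ := by
                rw [← Finset.subset_empty]
                intro z hz
                simp only [Finset.mem_inter] at hz
                exact absurd ⟨z, Finset.mem_inter.2 ⟨hz.1.2, hz.2⟩⟩ m23
              rw [ht, Finset.card_empty, if_pos m12, if_pos m13, if_neg m23,
                ai_of_meet h12 m12, ai_of_meet h13 m13, ai_of_not_meet m23]
              norm_num
          · have ht : cube w1 ∩ cube w2 ∩ cube w3 = ∅ := by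
              rw [← Finset.subset_empty]
              intro z hz
              simp only [Finset.mem_inter] at hz
              exact absurd ⟨z, Finset.mem_inter.2 ⟨hz.1.1, hz.2⟩⟩ m13
            rw [ht, Finset.card_empty, if_pos m12, if_neg m13,
              ai_of_meet h12 m12, ai_of_not_meet m13]
            by_cases m23 : (cube w2 ∩ cube w3).Nonempty
            · rw [if_pos m23, ai_of_meet h23 m23]; norm_num
            · rw [if_neg m23, ai_of_not_meet m23]; norm_num
        · have ht : cube w1 ∩ cube w2 ∩ cube w3 = ∅ := by
            rw [← Finset.subset_empty]
            intro z hz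
            simp only [Finset.mem_inter] at hz
            exact absurd ⟨z, Finset.mem_inter.2 ⟨hz.1.1, hz.1.2⟩⟩ m12
          rw [ht, Finset.card_empty, if_neg m12, ai_of_not_meet m12]
          by_cases m13 : (cube w1 ∩ cube w3).Nonempty
          · by_cases m23 : (cube w2 ∩ cube w3).Nonempty
            · rw [if_pos m13, if_pos m23, ai_of_meet h13 m13, ai_of_meet h23 m23]; norm_num
            · rw [if_pos m13, if_neg m23, ai_of_meet h13 m13, ai_of_not_meet m23]; norm_num
          · by_cases m23 : (cube w2 ∩ cube w3).Nonempty
            · rw [if_neg m13, if_pos m23, ai_of_not_meet m13, ai_of_meet h23 m23]; norm_num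
            · rw [if_neg m13, if_neg m23, ai_of_not_meet m13, ai_of_not_meet m23]; norm_num

end TM
namespace TM
variable {n : ℕ}

lemma sum_ei {w : Fin n → Option Bool} (hw : w ∈ Word n 1) :
    ∑ v ∈ Word n 1, ei w v = 1 := by
  simp only [ei]
  rw [Finset.sum_ite_eq (Word n 1) w (fun _ => (1:ℝ)), if_pos hw]

lemma sum_ei' {w : Fin n → Option Bool} (hw : w ∈ Word n 1) :
    ∑ v ∈ Word n 1, ei v w = 1 := by
  have : ∀ v ∈ Word n 1, ei v w = ei w v := by
    intro v _; simp only [ei, eq_comm]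
  rw [Finset.sum_congr rfl this, sum_ei hw]

lemma sum_ai (hn : 1 ≤ n) {w : Fin n → Option Bool} (hw : w ∈ Word n 1) :
    ∑ v ∈ Word n 1, ai w v = 2 * ((n:ℝ) - 1) := by
  simp only [ai]
  rw [Finset.sum_boole]
  have hcard : ((Word n 1).filter fun v => w ≠ v ∧ (cube w ∩ cube v).Nonempty).card
      = 2 * (n - 1) := by
    rw [← adj_count hw]
    congr 1
    apply Finset.filter_congr
    intro v _
    constructor
    · rintro ⟨h1, h2⟩; exact ⟨h1.symm, h2⟩
    · rintro ⟨h1, h2⟩; exact ⟨h1.symm, h2⟩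
  rw [hcard]
  push_cast [Nat.cast_sub hn]
  ring

lemma sum_ai' (hn : 1 ≤ n) {w : Fin n → Option Bool} (hw : w ∈ Word n 1) :
    ∑ v ∈ Word n 1, ai v w = 2 * ((n:ℝ) - 1) := by
  have : ∀ v ∈ Word n 1, ai v w = ai w v := fun v _ => ai_comm v w
  rw [Finset.sum_congr rfl this, sum_ai hn hw]

lemma sum_aiai {w1 w2 : Fin n → Option Bool} (hw1 : w1 ∈ Word n 1)
    (hw2 : w2 ∈ Word n 1) (hne : w1 ≠ w2) (hmeet : (cube w1 ∩ cube w2).Nonempty) :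
    ∑ v ∈ Word n 1, ai w1 v * ai w2 v = (n:ℝ) - 2 := by
  obtain ⟨x, hx⟩ := hmeet
  rw [Finset.mem_inter] at hx
  have h2n : 2 ≤ n := two_le_of_adj hw1 hw2 hne ⟨x, Finset.mem_inter.2 hx⟩
  have hpt : ∀ v, ai w1 v * ai w2 v
      = if (v ≠ w1 ∧ (cube w1 ∩ cube v).Nonempty) ∧ (v ≠ w2 ∧ (cube w2 ∩ cube v).Nonempty)
        then (1:ℝ) else 0 := by
    intro v
    simp only [ai]
    by_cases h1 : w1 ≠ v ∧ (cube w1 ∩ cube v).Nonempty <;>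
      by_cases h2 : w2 ≠ v ∧ (cube w2 ∩ cube v).Nonempty
    · rw [if_pos h1, if_pos h2, if_pos ⟨⟨h1.1.symm, h1.2⟩, ⟨h2.1.symm, h2.2⟩⟩]; norm_num
    · rw [if_pos h1, if_neg h2, if_neg (fun hc => h2 ⟨hc.2.1.symm, hc.2.2⟩)]; norm_num
    · rw [if_neg h1, if_pos h2, if_neg (fun hc => h1 ⟨hc.1.1.symm, hc.1.2⟩)]; norm_num
    · rw [if_neg h1, if_neg h2, if_neg (fun hc => h1 ⟨hc.1.1.symm, hc.1.2⟩)]; norm_num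
  rw [Finset.sum_congr rfl (fun v _ => hpt v), Finset.sum_boole,
    star_count hw1 hw2 hne hx.1 hx.2]
  push_cast [Nat.cast_sub h2n]
  ring

end TM
namespace TM
variable {n : ℕ}

lemma B_one :
    ∑ _w1 ∈ Word n 1, ∑ _w2 ∈ Word n 1, ∑ _w3 ∈ Word n 1, (1:ℝ)
      = ((Word n 1).card : ℝ)^3 := by
  simp [Finset.sum_const, nsmul_eq_mul]; ring

lemma B_a12 (hn : 1 ≤ n) :
    ∑ w1 ∈ Word n 1, ∑ w2 ∈ Word n 1, ∑ _w3 ∈ Word n 1, ai w1 w2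
      = ((Word n 1).card : ℝ)^2 * (2*((n:ℝ)-1)) := by
  have h : ∀ w1 ∈ Word n 1, (∑ w2 ∈ Word n 1, ∑ _w3 ∈ Word n 1, ai w1 w2)
      = ((Word n 1).card:ℝ) * (2*((n:ℝ)-1)) := by
    intro w1 h1
    have h2 : ∀ w2 ∈ Word n 1, (∑ _w3 ∈ Word n 1, ai w1 w2)
        = ((Word n 1).card:ℝ) * ai w1 w2 := by
      intro w2 _; rw [Finset.sum_const, nsmul_eq_mul]
    rw [Finset.sum_congr rfl h2, ← Finset.mul_sum, sum_ai hn h1]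
  rw [Finset.sum_congr rfl h, Finset.sum_const, nsmul_eq_mul]; ring

lemma B_a13 (hn : 1 ≤ n) :
    ∑ w1 ∈ Word n 1, ∑ _w2 ∈ Word n 1, ∑ w3 ∈ Word n 1, ai w1 w3
      = ((Word n 1).card : ℝ)^2 * (2*((n:ℝ)-1)) := by
  have h : ∀ w1 ∈ Word n 1, (∑ _w2 ∈ Word n 1, ∑ w3 ∈ Word n 1, ai w1 w3)
      = ((Word n 1).card:ℝ) * (2*((n:ℝ)-1)) := by
    intro w1 h1
    have h2 : ∀ w2 ∈ Word n 1, (∑ w3 ∈ Word n 1, ai w1 w3) = 2*((n:ℝ)-1) :=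
      fun w2 _ => sum_ai hn h1
    rw [Finset.sum_congr rfl h2, Finset.sum_const, nsmul_eq_mul]
  rw [Finset.sum_congr rfl h, Finset.sum_const, nsmul_eq_mul]; ring

lemma B_a23 (hn : 1 ≤ n) :
    ∑ _w1 ∈ Word n 1, ∑ w2 ∈ Word n 1, ∑ w3 ∈ Word n 1, ai w2 w3
      = ((Word n 1).card : ℝ)^2 * (2*((n:ℝ)-1)) := by
  have h : ∀ w1 ∈ Word n 1, (∑ w2 ∈ Word n 1, ∑ w3 ∈ Word n 1, ai w2 w3)
      = ((Word n 1).card:ℝ) * (2*((n:ℝ)-1)) := by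
    intro w1 _
    have h2 : ∀ w2 ∈ Word n 1, (∑ w3 ∈ Word n 1, ai w2 w3) = 2*((n:ℝ)-1) :=
      fun w2 hw2 => sum_ai hn hw2
    rw [Finset.sum_congr rfl h2, Finset.sum_const, nsmul_eq_mul]
  rw [Finset.sum_congr rfl h, Finset.sum_const, nsmul_eq_mul]; ring

lemma B_a12a13 (hn : 1 ≤ n) :
    ∑ w1 ∈ Word n 1, ∑ w2 ∈ Word n 1, ∑ w3 ∈ Word n 1, ai w1 w2 * ai w1 w3
      = ((Word n 1).card : ℝ) * (2*((n:ℝ)-1))^2 := by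
  have h : ∀ w1 ∈ Word n 1, (∑ w2 ∈ Word n 1, ∑ w3 ∈ Word n 1, ai w1 w2 * ai w1 w3)
      = (2*((n:ℝ)-1))^2 := by
    intro w1 h1
    have h2 : ∀ w2 ∈ Word n 1, (∑ w3 ∈ Word n 1, ai w1 w2 * ai w1 w3)
        = ai w1 w2 * (2*((n:ℝ)-1)) := by
      intro w2 _; rw [← Finset.mul_sum, sum_ai hn h1]
    rw [Finset.sum_congr rfl h2, ← Finset.sum_mul, sum_ai hn h1]; ring
  rw [Finset.sum_congr rfl h, Finset.sum_const, nsmul_eq_mul]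

lemma B_a12a23 (hn : 1 ≤ n) :
    ∑ w1 ∈ Word n 1, ∑ w2 ∈ Word n 1, ∑ w3 ∈ Word n 1, ai w1 w2 * ai w2 w3
      = ((Word n 1).card : ℝ) * (2*((n:ℝ)-1))^2 := by
  have h : ∀ w1 ∈ Word n 1, (∑ w2 ∈ Word n 1, ∑ w3 ∈ Word n 1, ai w1 w2 * ai w2 w3)
      = (2*((n:ℝ)-1))^2 := by
    intro w1 h1
    have h2 : ∀ w2 ∈ Word n 1, (∑ w3 ∈ Word n 1, ai w1 w2 * ai w2 w3)
        = ai w1 w2 * (2*((n:ℝ)-1)) := by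
      intro w2 hw2; rw [← Finset.mul_sum, sum_ai hn hw2]
    rw [Finset.sum_congr rfl h2, ← Finset.sum_mul, sum_ai hn h1]; ring
  rw [Finset.sum_congr rfl h, Finset.sum_const, nsmul_eq_mul]

lemma B_a13a23 (hn : 1 ≤ n) :
    ∑ w1 ∈ Word n 1, ∑ w2 ∈ Word n 1, ∑ w3 ∈ Word n 1, ai w1 w3 * ai w2 w3
      = ((Word n 1).card : ℝ) * (2*((n:ℝ)-1))^2 := by
  have h : ∀ w1 ∈ Word n 1, (∑ w2 ∈ Word n 1, ∑ w3 ∈ Word n 1, ai w1 w3 * ai w2 w3)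
      = (2*((n:ℝ)-1))^2 := by
    intro w1 h1
    rw [Finset.sum_comm]
    have h2 : ∀ w3 ∈ Word n 1, (∑ w2 ∈ Word n 1, ai w1 w3 * ai w2 w3)
        = ai w1 w3 * (2*((n:ℝ)-1)) := by
      intro w3 hw3; rw [← Finset.mul_sum, sum_ai' hn hw3]
    rw [Finset.sum_congr rfl h2, ← Finset.sum_mul, sum_ai hn h1]; ring
  rw [Finset.sum_congr rfl h, Finset.sum_const, nsmul_eq_mul]

lemma B_star (hn : 1 ≤ n) :
    ∑ w1 ∈ Word n 1, ∑ w2 ∈ Word n 1, ∑ w3 ∈ Word n 1, ai w1 w2 * (ai w1 w3 * ai w2 w3)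
      = ((Word n 1).card : ℝ) * (2*((n:ℝ)-1)) * ((n:ℝ)-2) := by
  have h : ∀ w1 ∈ Word n 1, (∑ w2 ∈ Word n 1, ∑ w3 ∈ Word n 1, ai w1 w2 * (ai w1 w3 * ai w2 w3))
      = (2*((n:ℝ)-1)) * ((n:ℝ)-2) := by
    intro w1 h1
    have h2 : ∀ w2 ∈ Word n 1, (∑ w3 ∈ Word n 1, ai w1 w2 * (ai w1 w3 * ai w2 w3))
        = ai w1 w2 * ((n:ℝ)-2) := by
      intro w2 hw2
      rw [← Finset.mul_sum]
      by_cases hc : w1 ≠ w2 ∧ (cube w1 ∩ cube w2).Nonempty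
      · rw [sum_aiai h1 hw2 hc.1 hc.2]
      · have : ai w1 w2 = 0 := by simp only [ai, if_neg hc]
        rw [this, zero_mul, zero_mul]
    rw [Finset.sum_congr rfl h2, ← Finset.sum_mul, sum_ai hn h1]
  rw [Finset.sum_congr rfl h, Finset.sum_const, nsmul_eq_mul]; ring

lemma B_e12 :
    ∑ w1 ∈ Word n 1, ∑ w2 ∈ Word n 1, ∑ _w3 ∈ Word n 1, ei w1 w2
      = ((Word n 1).card : ℝ)^2 := by
  have h : ∀ w1 ∈ Word n 1, (∑ w2 ∈ Word n 1, ∑ _w3 ∈ Word n 1, ei w1 w2)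
      = ((Word n 1).card:ℝ) := by
    intro w1 h1
    have h2 : ∀ w2 ∈ Word n 1, (∑ _w3 ∈ Word n 1, ei w1 w2)
        = ((Word n 1).card:ℝ) * ei w1 w2 := by
      intro w2 _; rw [Finset.sum_const, nsmul_eq_mul]
    rw [Finset.sum_congr rfl h2, ← Finset.mul_sum, sum_ei h1, mul_one]
  rw [Finset.sum_congr rfl h, Finset.sum_const, nsmul_eq_mul]; ring

lemma B_e13 :
    ∑ w1 ∈ Word n 1, ∑ _w2 ∈ Word n 1, ∑ w3 ∈ Word n 1, ei w1 w3
      = ((Word n 1).card : ℝ)^2 := by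
  have h : ∀ w1 ∈ Word n 1, (∑ _w2 ∈ Word n 1, ∑ w3 ∈ Word n 1, ei w1 w3)
      = ((Word n 1).card:ℝ) := by
    intro w1 h1
    have h2 : ∀ w2 ∈ Word n 1, (∑ w3 ∈ Word n 1, ei w1 w3) = 1 :=
      fun w2 _ => sum_ei h1
    rw [Finset.sum_congr rfl h2, Finset.sum_const, nsmul_eq_mul, mul_one]
  rw [Finset.sum_congr rfl h, Finset.sum_const, nsmul_eq_mul]; ring

lemma B_e23 :
    ∑ _w1 ∈ Word n 1, ∑ w2 ∈ Word n 1, ∑ w3 ∈ Word n 1, ei w2 w3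
      = ((Word n 1).card : ℝ)^2 := by
  have h : ∀ w1 ∈ Word n 1, (∑ w2 ∈ Word n 1, ∑ w3 ∈ Word n 1, ei w2 w3)
      = ((Word n 1).card:ℝ) := by
    intro w1 _
    have h2 : ∀ w2 ∈ Word n 1, (∑ w3 ∈ Word n 1, ei w2 w3) = 1 :=
      fun w2 hw2 => sum_ei hw2
    rw [Finset.sum_congr rfl h2, Finset.sum_const, nsmul_eq_mul, mul_one]
  rw [Finset.sum_congr rfl h, Finset.sum_const, nsmul_eq_mul]; ring

lemma B_e12a13 (hn : 1 ≤ n) :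
    ∑ w1 ∈ Word n 1, ∑ w2 ∈ Word n 1, ∑ w3 ∈ Word n 1, ei w1 w2 * ai w1 w3
      = ((Word n 1).card : ℝ) * (2*((n:ℝ)-1)) := by
  have h : ∀ w1 ∈ Word n 1, (∑ w2 ∈ Word n 1, ∑ w3 ∈ Word n 1, ei w1 w2 * ai w1 w3)
      = 2*((n:ℝ)-1) := by
    intro w1 h1
    have h2 : ∀ w2 ∈ Word n 1, (∑ w3 ∈ Word n 1, ei w1 w2 * ai w1 w3)
        = ei w1 w2 * (2*((n:ℝ)-1)) := by
      intro w2 _; rw [← Finset.mul_sum, sum_ai hn h1]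
    rw [Finset.sum_congr rfl h2, ← Finset.sum_mul, sum_ei h1, one_mul]
  rw [Finset.sum_congr rfl h, Finset.sum_const, nsmul_eq_mul]

lemma B_e13a12 (hn : 1 ≤ n) :
    ∑ w1 ∈ Word n 1, ∑ w2 ∈ Word n 1, ∑ w3 ∈ Word n 1, ei w1 w3 * ai w1 w2
      = ((Word n 1).card : ℝ) * (2*((n:ℝ)-1)) := by
  have h : ∀ w1 ∈ Word n 1, (∑ w2 ∈ Word n 1, ∑ w3 ∈ Word n 1, ei w1 w3 * ai w1 w2)
      = 2*((n:ℝ)-1) := by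
    intro w1 h1
    have h2 : ∀ w2 ∈ Word n 1, (∑ w3 ∈ Word n 1, ei w1 w3 * ai w1 w2) = ai w1 w2 := by
      intro w2 _; rw [← Finset.sum_mul, sum_ei h1, one_mul]
    rw [Finset.sum_congr rfl h2, sum_ai hn h1]
  rw [Finset.sum_congr rfl h, Finset.sum_const, nsmul_eq_mul]

lemma B_e23a12 (hn : 1 ≤ n) :
    ∑ w1 ∈ Word n 1, ∑ w2 ∈ Word n 1, ∑ w3 ∈ Word n 1, ei w2 w3 * ai w1 w2
      = ((Word n 1).card : ℝ) * (2*((n:ℝ)-1)) := by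
  have h : ∀ w1 ∈ Word n 1, (∑ w2 ∈ Word n 1, ∑ w3 ∈ Word n 1, ei w2 w3 * ai w1 w2)
      = 2*((n:ℝ)-1) := by
    intro w1 h1
    have h2 : ∀ w2 ∈ Word n 1, (∑ w3 ∈ Word n 1, ei w2 w3 * ai w1 w2) = ai w1 w2 := by
      intro w2 hw2; rw [← Finset.sum_mul, sum_ei hw2, one_mul]
    rw [Finset.sum_congr rfl h2, sum_ai hn h1]
  rw [Finset.sum_congr rfl h, Finset.sum_const, nsmul_eq_mul]

lemma B_e12e13 :
    ∑ w1 ∈ Word n 1, ∑ w2 ∈ Word n 1, ∑ w3 ∈ Word n 1, ei w1 w2 * ei w1 w3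
      = ((Word n 1).card : ℝ) := by
  have h : ∀ w1 ∈ Word n 1, (∑ w2 ∈ Word n 1, ∑ w3 ∈ Word n 1, ei w1 w2 * ei w1 w3)
      = 1 := by
    intro w1 h1
    have h2 : ∀ w2 ∈ Word n 1, (∑ w3 ∈ Word n 1, ei w1 w2 * ei w1 w3)
        = ei w1 w2 := by
      intro w2 _; rw [← Finset.mul_sum, sum_ei h1, mul_one]
    rw [Finset.sum_congr rfl h2, sum_ei h1]
  rw [Finset.sum_congr rfl h, Finset.sum_const, nsmul_eq_mul, mul_one]

end TM
namespace TM
variable {n : ℕ}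

lemma pull_mul {α : Type*} (s : Finset α) (c : ℝ) (f : α → α → α → ℝ) :
    ∑ w1 ∈ s, ∑ w2 ∈ s, ∑ w3 ∈ s, c * f w1 w2 w3
      = c * ∑ w1 ∈ s, ∑ w2 ∈ s, ∑ w3 ∈ s, f w1 w2 w3 := by
  rw [Finset.mul_sum]
  apply Finset.sum_congr rfl; intro w1 _
  rw [Finset.mul_sum]
  apply Finset.sum_congr rfl; intro w2 _
  rw [Finset.mul_sum]

lemma sumT (hn : 1 ≤ n) :
    ∑ w1 ∈ Word n 1, ∑ w2 ∈ Word n 1, ∑ w3 ∈ Word n 1,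
      ((2:ℝ) ^ ((cube w1 ∩ cube w2).card + (cube w1 ∩ cube w3).card
          + (cube w2 ∩ cube w3).card)
        / 2 ^ ((cube w1 ∩ cube w2 ∩ cube w3).card))
    = ((Word n 1).card : ℝ)^3 + 6*((Word n 1).card : ℝ)^2*((n:ℝ)-1)
      + 12*((Word n 1).card : ℝ)*((n:ℝ)-1)^2
      - 6*((Word n 1).card : ℝ)*((n:ℝ)-1)*((n:ℝ)-2)
      + 9*((Word n 1).card : ℝ)^2 + 6*((Word n 1).card : ℝ)*((n:ℝ)-1)
      + 6*((Word n 1).card : ℝ) := by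
  have hgid : ∑ w1 ∈ Word n 1, ∑ w2 ∈ Word n 1, ∑ w3 ∈ Word n 1,
      ((2:ℝ) ^ ((cube w1 ∩ cube w2).card + (cube w1 ∩ cube w3).card
          + (cube w2 ∩ cube w3).card)
        / 2 ^ ((cube w1 ∩ cube w2 ∩ cube w3).card))
      = ∑ w1 ∈ Word n 1, ∑ w2 ∈ Word n 1, ∑ w3 ∈ Word n 1,
        (1 + ai w1 w2 + ai w1 w3 + ai w2 w3
          + ai w1 w2 * ai w1 w3 + ai w1 w2 * ai w2 w3 + ai w1 w3 * ai w2 w3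
          - 3 * (ai w1 w2 * (ai w1 w3 * ai w2 w3))
          + 3 * ei w1 w2 + 3 * ei w1 w3 + 3 * ei w2 w3
          + ei w1 w2 * ai w1 w3 + ei w1 w3 * ai w1 w2 + ei w2 w3 * ai w1 w2
          + 6 * (ei w1 w2 * ei w1 w3)) := by
    apply Finset.sum_congr rfl; intro w1 h1
    apply Finset.sum_congr rfl; intro w2 h2
    apply Finset.sum_congr rfl; intro w3 h3
    exact gid h1 h2 h3
  rw [hgid]
  simp only [Finset.sum_add_distrib, Finset.sum_sub_distrib]
  rw [pull_mul (Word n 1) 3 (fun w1 w2 w3 => ai w1 w2 * (ai w1 w3 * ai w2 w3))]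
  rw [pull_mul (Word n 1) 3 (fun w1 w2 _ => ei w1 w2)]
  rw [pull_mul (Word n 1) 3 (fun w1 _ w3 => ei w1 w3)]
  rw [pull_mul (Word n 1) 3 (fun _ w2 w3 => ei w2 w3)]
  rw [pull_mul (Word n 1) 6 (fun w1 w2 w3 => ei w1 w2 * ei w1 w3)]
  rw [B_one, B_a12 hn, B_a13 hn, B_a23 hn, B_a12a13 hn, B_a12a23 hn, B_a13a23 hn,
    B_star hn, B_e12, B_e13, B_e23, B_e12a13 hn, B_e13a12 hn, B_e23a12 hn, B_e12e13]
  ring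

lemma card_supersets (T : Finset (Fin n → Bool)) :
    (Finset.univ.filter fun S => T ⊆ S).card = 2 ^ (2^n - T.card) := by
  classical
  have hb : (Finset.univ.filter fun S => T ⊆ S).card
      = ((Finset.univ : Finset (Fin n → Bool)) \ T).powerset.card := by
    apply Finset.card_bij' (fun S _ => S \ T) (fun R _ => R ∪ T)
    · intro S hS
      rw [Finset.mem_powerset]
      exact Finset.sdiff_subset_sdiff (Finset.subset_univ S) le_rfl
    · intro R hR
      simp only [Finset.mem_filter]
      exact ⟨Finset.mem_univ _, Finset.subset_union_right⟩
    · intro S hS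
      simp only [Finset.mem_filter] at hS
      exact Finset.sdiff_union_of_subset hS.2
    · intro R hR
      rw [Finset.mem_powerset, Finset.subset_sdiff] at hR
      rw [Finset.union_sdiff_right, Finset.sdiff_eq_self_of_disjoint hR.2]
  rw [hb, Finset.card_powerset, Finset.card_sdiff_of_subset (Finset.subset_univ T), Finset.card_univ]
  congr 2
  simp

lemma IE3 {α : Type*} [DecidableEq α] (A B C : Finset α) :
    (A ∪ B ∪ C).card + (A ∩ B).card + (A ∩ C).card + (B ∩ C).card
      = A.card + B.card + C.card + (A ∩ B ∩ C).card := by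
  have h1 := Finset.card_union_add_card_inter (A ∪ B) C
  have h2 := Finset.card_union_add_card_inter A B
  have h3 := Finset.card_union_add_card_inter (A ∩ C) (B ∩ C)
  rw [Finset.union_inter_distrib_right] at h1
  have h4 : A ∩ C ∩ (B ∩ C) = A ∩ B ∩ C := by
    ext x; simp only [Finset.mem_inter]; tauto
  rw [h4] at h3
  omega

lemma conv {w1 w2 w3 : Fin n → Option Bool} (hw1 : w1 ∈ Word n 1)
    (hw2 : w2 ∈ Word n 1) (hw3 : w3 ∈ Word n 1) :
    (2:ℝ) ^ (2^n - (cube w1 ∪ cube w2 ∪ cube w3).card) / 2 ^ (2^n)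
      = (2:ℝ) ^ ((cube w1 ∩ cube w2).card + (cube w1 ∩ cube w3).card
          + (cube w2 ∩ cube w3).card)
        / 2 ^ ((cube w1 ∩ cube w2 ∩ cube w3).card) / 64 := by
  have hie := IE3 (cube w1) (cube w2) (cube w3)
  rw [cube_card hw1, cube_card hw2, cube_card hw3] at hie
  have hu : (cube w1 ∪ cube w2 ∪ cube w3).card ≤ 2^n := by
    have h := Finset.card_le_univ (cube w1 ∪ cube w2 ∪ cube w3)
    have h2 : Fintype.card (Fin n → Bool) = 2^n := by simp
    rw [h2] at h
    exact h
  rw [div_div, div_eq_div_iff (by positivity) (by positivity)]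
  rw [show (64:ℝ) = 2^6 by norm_num, ← pow_add, ← pow_add, ← pow_add]
  congr 1
  omega

lemma EX_eq :
    Ex n (fun S => (Xr n 1 S : ℝ) ^ 3)
      = (∑ w1 ∈ Word n 1, ∑ w2 ∈ Word n 1, ∑ w3 ∈ Word n 1,
          ((2:ℝ) ^ ((cube w1 ∩ cube w2).card + (cube w1 ∩ cube w3).card
              + (cube w2 ∩ cube w3).card)
            / 2 ^ ((cube w1 ∩ cube w2 ∩ cube w3).card))) / 64 := by
  classical
  have hXr : ∀ S : Finset (Fin n → Bool),
      (Xr n 1 S : ℝ) = ∑ w ∈ Word n 1, if cube w ⊆ S then (1:ℝ) else 0 := by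
    intro S
    rw [Finset.sum_boole]
    norm_num [Xr]
  have hmerge : ∀ (S : Finset (Fin n → Bool)) w1 w2 w3,
      ((if cube w1 ⊆ S then (1:ℝ) else 0) * (if cube w2 ⊆ S then (1:ℝ) else 0))
        * (if cube w3 ⊆ S then (1:ℝ) else 0)
      = if cube w1 ∪ cube w2 ∪ cube w3 ⊆ S then (1:ℝ) else 0 := by
    intro S w1 w2 w3
    simp only [Finset.union_subset_iff]
    by_cases h1 : cube w1 ⊆ S <;> by_cases h2 : cube w2 ⊆ S <;>
      by_cases h3 : cube w3 ⊆ S <;> simp [h1, h2, h3]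
  have hS : ∀ S : Finset (Fin n → Bool),
      (Xr n 1 S : ℝ)^3 = ∑ w1 ∈ Word n 1, ∑ w2 ∈ Word n 1, ∑ w3 ∈ Word n 1,
        (if cube w1 ∪ cube w2 ∪ cube w3 ⊆ S then (1:ℝ) else 0) := by
    intro S
    rw [hXr S]
    rw [show (∑ w ∈ Word n 1, if cube w ⊆ S then (1:ℝ) else 0)^3
        = ((∑ w ∈ Word n 1, if cube w ⊆ S then (1:ℝ) else 0)
            * (∑ w ∈ Word n 1, if cube w ⊆ S then (1:ℝ) else 0))
          * (∑ w ∈ Word n 1, if cube w ⊆ S then (1:ℝ) else 0) from by ring]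
    rw [Finset.sum_mul_sum, Finset.sum_mul]
    apply Finset.sum_congr rfl; intro w1 _
    rw [Finset.sum_mul]
    apply Finset.sum_congr rfl; intro w2 _
    rw [Finset.mul_sum]
    apply Finset.sum_congr rfl; intro w3 _
    exact hmerge S w1 w2 w3
  have hnum : ∑ S : Finset (Fin n → Bool), (Xr n 1 S : ℝ)^3
      = ∑ w1 ∈ Word n 1, ∑ w2 ∈ Word n 1, ∑ w3 ∈ Word n 1,
          (2:ℝ) ^ (2^n - (cube w1 ∪ cube w2 ∪ cube w3).card) := by
    rw [Finset.sum_congr rfl (fun S _ => hS S)]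
    rw [Finset.sum_comm]
    apply Finset.sum_congr rfl; intro w1 _
    rw [Finset.sum_comm]
    apply Finset.sum_congr rfl; intro w2 _
    rw [Finset.sum_comm]
    apply Finset.sum_congr rfl; intro w3 _
    rw [Finset.sum_boole, card_supersets]
    push_cast
    ring
  have hcard : ((Fintype.card (Finset (Fin n → Bool))) : ℝ) = 2 ^ (2^n : ℕ) := by
    rw [Fintype.card_finset]
    push_cast
    congr 1
    simp
  unfold Ex
  rw [hnum, hcard]
  rw [Finset.sum_div, Finset.sum_div]
  apply Finset.sum_congr rfl; intro w1 h1
  rw [Finset.sum_div, Finset.sum_div]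
  apply Finset.sum_congr rfl; intro w2 h2
  rw [Finset.sum_div, Finset.sum_div]
  apply Finset.sum_congr rfl; intro w3 h3
  exact conv h1 h2 h3

end TM

/-- Third moment of the number of edges contained in a uniformly random
subset of `{0,1}^n`. -/
theorem third_moment_X1 (n : ℕ) (hn : 1 ≤ n) :
    Ex n (fun S => (Xr n 1 S : ℝ) ^ 3)
      = 2 ^ n * (n : ℝ) ^ 2 *
          (((2 : ℝ) ^ n) ^ 2 * n + 12 * 2 ^ n * n + 6 * 2 ^ n + 24 * n) / 512 := by
  obtain ⟨m, rfl⟩ : ∃ m, n = m + 1 := ⟨n - 1, by omega⟩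
  have hC : (((Word (m+1) 1).card : ℕ) : ℝ) = ((m:ℝ)+1) * 2^m := by
    rw [TM.card_word' hn]
    push_cast
    ring_nf
  rw [TM.EX_eq, TM.sumT hn, hC]
  push_cast
  ring
end

section
/- For a uniformly random subset S of {0,1}^n with n ≥ 1, the third central moment of the number X_1 of edges contained in S equals 3 n³ 2^n / 64, i.e., E[(X_1 − μ)³] = 3 n³ 2^n / 64 where μ = E[X_1] = n·2^{n-1}/4. -/
open Finset

namespace TCM

variable {n : ℕ}

noncomputable def bb (S : Finset (Fin n → Bool)) (x : Fin n → Bool) : ℝ :=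
  (if x ∈ S then 1 else 0) - 1/2

lemma bb_eq (S : Finset (Fin n → Bool)) (x : Fin n → Bool) :
    bb S x = if x ∈ S then (1/2 : ℝ) else -(1/2) := by
  unfold bb; split <;> norm_num

noncomputable def mval (c : ℕ) : ℝ := ((1/2)^c + (-(1/2 : ℝ))^c)/2

lemma mval_zero : mval 0 = 1 := by norm_num [mval]
lemma mval_two : mval 2 = 1/4 := by norm_num [mval]
lemma mval_odd {c : ℕ} (h : Odd c) : mval c = 0 := by
  simp [mval, h.neg_pow]

lemma card_finset_real :
    (Fintype.card (Finset (Fin n → Bool)) : ℝ) = ∏ _x : Fin n → Bool, 2 := by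
  simp [Fintype.card_finset]

lemma Ex_prod_bb (ms : Multiset (Fin n → Bool)) :
    Ex n (fun S => (ms.map (bb S)).prod) = ∏ x : Fin n → Bool, mval (ms.count x) := by
  unfold Ex
  have hcard : (Fintype.card (Finset (Fin n → Bool)) : ℝ) ≠ 0 := by positivity
  rw [div_eq_iff hcard, card_finset_real]
  have key : ∀ S : Finset (Fin n → Bool),
      (ms.map (bb S)).prod
        = (∏ x ∈ S, ((1:ℝ)/2)^(ms.count x)) * ∏ x ∈ Sᶜ, (-(1/2:ℝ))^(ms.count x) := by
    intro S
    rw [Finset.prod_multiset_map_count]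
    have hext : ∏ m ∈ ms.toFinset, bb S m ^ ms.count m
        = ∏ x : Fin n → Bool, bb S x ^ ms.count x := by
      apply Finset.prod_subset (Finset.subset_univ _)
      intro x _ hx
      rw [Multiset.count_eq_zero_of_notMem (by simpa using hx), pow_zero]
    rw [hext, ← Finset.prod_mul_prod_compl S (fun x => bb S x ^ ms.count x)]
    congr 1
    · exact Finset.prod_congr rfl fun x hx => by rw [bb_eq, if_pos hx]
    · exact Finset.prod_congr rfl fun x hx => by rw [bb_eq, if_neg (by simpa using hx)]
  calc ∑ S : Finset (Fin n → Bool), (ms.map (bb S)).prod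
      = ∑ S ∈ (Finset.univ : Finset (Fin n → Bool)).powerset,
          (∏ x ∈ S, ((1:ℝ)/2)^(ms.count x)) * ∏ x ∈ Finset.univ \ S, (-(1/2:ℝ))^(ms.count x) := by
        rw [Finset.powerset_univ]
        exact Finset.sum_congr rfl fun S _ => by
          rw [key S, Finset.compl_eq_univ_sdiff]
    _ = ∏ x : Fin n → Bool, (((1:ℝ)/2)^(ms.count x) + (-(1/2:ℝ))^(ms.count x)) := by
        rw [Finset.prod_add]
    _ = (∏ x : Fin n → Bool, mval (ms.count x)) * ∏ _x : Fin n → Bool, (2:ℝ) := by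
        rw [← Finset.prod_mul_distrib]
        exact Finset.prod_congr rfl fun x _ => by rw [mval]; ring

lemma Ex_zero_of_odd (ms : Multiset (Fin n → Bool)) (h : ∃ x, Odd (ms.count x)) :
    Ex n (fun S => (ms.map (bb S)).prod) = 0 := by
  obtain ⟨x, hx⟩ := h
  rw [Ex_prod_bb]
  exact Finset.prod_eq_zero (Finset.mem_univ x) (mval_odd hx)

lemma Ex_zero_of_odd_card (ms : Multiset (Fin n → Bool)) (h : Odd ms.card) :
    Ex n (fun S => (ms.map (bb S)).prod) = 0 := by
  apply Ex_zero_of_odd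
  by_contra hc
  push_neg at hc
  simp only [Nat.not_odd_iff_even] at hc
  have : Even ms.card := by
    rw [← Multiset.toFinset_sum_count_eq]
    exact Finset.even_sum _ fun x _ => hc x
  exact (Nat.not_even_iff_odd.2 h) this

lemma Ex_add (f g : Finset (Fin n → Bool) → ℝ) :
    Ex n (fun S => f S + g S) = Ex n f + Ex n g := by
  unfold Ex; rw [Finset.sum_add_distrib, add_div]

lemma Ex_const_mul (c : ℝ) (f : Finset (Fin n → Bool) → ℝ) :
    Ex n (fun S => c * f S) = c * Ex n f := by
  unfold Ex; rw [← Finset.mul_sum, mul_div_assoc]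

lemma Ex_const (c : ℝ) : Ex n (fun _ => c) = c := by
  unfold Ex
  rw [Finset.sum_const, Finset.card_univ, nsmul_eq_mul, mul_comm, mul_div_assoc, div_self,
    mul_one]
  positivity

lemma Ex_sum {ι : Type*} (A : Finset ι) (F : ι → Finset (Fin n → Bool) → ℝ) :
    Ex n (fun S => ∑ w ∈ A, F w S) = ∑ w ∈ A, Ex n (F w) := by
  unfold Ex
  rw [Finset.sum_comm, Finset.sum_div]

def e0 {n : ℕ} (w : Fin n → Option Bool) : Fin n → Bool := fun j => (w j).getD false
def e1 {n : ℕ} (w : Fin n → Option Bool) : Fin n → Bool := fun j => (w j).getD true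

def mask {n : ℕ} (x : Fin n → Bool) (i : Fin n) : Fin n → Option Bool :=
  fun j => if j = i then none else some (x j)

lemma word1_struct {w : Fin n → Option Bool} (hw : w ∈ Word n 1) :
    ∃ i, w i = none ∧ ∀ j, j ≠ i → w j ≠ none := by
  simp only [Word, Finset.mem_filter] at hw
  obtain ⟨i, hi⟩ := Finset.card_eq_one.1 hw.2
  refine ⟨i, ?_, ?_⟩
  · have : i ∈ Finset.univ.filter fun j => w j = none := hi ▸ Finset.mem_singleton_self i
    simpa using this
  · intro j hj hnone
    have : j ∈ Finset.univ.filter fun j => w j = none := by simpa using hnone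
    rw [hi] at this
    exact hj (Finset.mem_singleton.1 this)

lemma mask_mem_word1 (x : Fin n → Bool) (i : Fin n) : mask x i ∈ Word n 1 := by
  simp only [Word, Finset.mem_filter, Finset.mem_univ, true_and]
  have : (Finset.univ.filter fun j => mask x i j = none) = {i} := by
    ext j
    simp only [Finset.mem_filter, Finset.mem_univ, true_and, Finset.mem_singleton, mask]
    constructor
    · intro h; by_contra hj; simp [hj] at h
    · intro h; simp [h]
  rw [this, Finset.card_singleton]

lemma e0_mask {x : Fin n → Bool} {i : Fin n} (hx : x i = false) : e0 (mask x i) = x := by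
  funext j
  by_cases hj : j = i
  · subst hj; simp [e0, mask, hx]
  · simp [e0, mask, hj]

lemma e1_mask {x : Fin n → Bool} {i : Fin n} (hx : x i = true) : e1 (mask x i) = x := by
  funext j
  by_cases hj : j = i
  · subst hj; simp [e1, mask, hx]
  · simp [e1, mask, hj]

lemma eq_mask {w : Fin n → Option Bool} {i : Fin n} (hi : w i = none)
    (hother : ∀ j, j ≠ i → w j ≠ none) : w = mask (e0 w) i := by
  funext j
  by_cases hj : j = i
  · subst hj; simp [mask, hi]
  · obtain ⟨c, hc⟩ := Option.ne_none_iff_exists'.1 (hother j hj)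
    simp [mask, hj, e0, hc]

lemma card_filter_false (hn : 1 ≤ n) (i : Fin n) :
    (Finset.univ.filter fun v : Fin n → Bool => v i = false).card = 2 ^ (n - 1) := by
  have h2 : 2 ^ n = 2 ^ (n - 1) * 2 := by
    conv_lhs => rw [show n = n - 1 + 1 from (Nat.succ_pred_eq_of_pos hn).symm]
    rw [pow_succ]
  have hsplit : (Finset.univ.filter fun v : Fin n → Bool => v i = false).card
      + (Finset.univ.filter fun v : Fin n → Bool => ¬ v i = false).card
      = (Finset.univ : Finset (Fin n → Bool)).card :=
    Finset.card_filter_add_card_filter_not _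
  have hcard : (Finset.univ : Finset (Fin n → Bool)).card = 2 ^ n := by
    simp [Finset.card_univ]
  have heq : (Finset.univ.filter fun v : Fin n → Bool => ¬ v i = false).card
      = (Finset.univ.filter fun v : Fin n → Bool => v i = false).card := by
    apply Finset.card_bij (fun v _ => Function.update v i false)
    · intro v hv
      simp [Function.update_self]
    · intro v hv v' hv' h
      simp only [Finset.mem_filter, Bool.not_eq_false] at hv hv'
      funext j
      by_cases hj : j = i
      · subst hj; rw [hv.2, hv'.2]
      · have := congrFun h j
        simpa [Function.update_of_ne hj] using this
    · intro v hv
      simp only [Finset.mem_filter, Finset.mem_univ, true_and] at hv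
      refine ⟨Function.update v i true, by simp, ?_⟩
      funext j
      by_cases hj : j = i
      · subst hj; simp [Function.update_self, hv]
      · simp [Function.update_of_ne hj]
  rw [heq, hcard, h2] at hsplit
  clear heq hcard h2
  generalize (Finset.univ.filter fun v : Fin n → Bool => v i = false).card = c at hsplit ⊢
  omega

lemma card_word1_filter (hn : 1 ≤ n) (i : Fin n) :
    ((Word n 1).filter fun w => w i = none).card = 2 ^ (n - 1) := by
  rw [← card_filter_false hn i]
  symm
  apply Finset.card_bij (fun v _ => mask v i)
  · intro v hv
    simp only [Finset.mem_filter, Finset.mem_univ, true_and] at hv ⊢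
    exact ⟨mask_mem_word1 v i, by simp [mask]⟩
  · intro v hv v' hv' h
    simp only [Finset.mem_filter, Finset.mem_univ, true_and] at hv hv'
    funext j
    by_cases hj : j = i
    · subst hj; rw [hv, hv']
    · have := congrFun h j
      simpa [mask, hj] using this
  · intro w hw
    simp only [Finset.mem_filter] at hw
    obtain ⟨i', hi', hother⟩ := word1_struct hw.1
    have hii : i = i' := by
      by_contra hne
      exact hother i hne hw.2
    subst hii
    refine ⟨e0 w, ?_, (eq_mask hi' hother).symm⟩
    simp only [Finset.mem_filter, Finset.mem_univ, true_and, e0, hw.2, Option.getD_none]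

lemma card_word1 (hn : 1 ≤ n) : (Word n 1).card = n * 2 ^ (n - 1) := by
  have h2 : ∑ i : Fin n, ((Word n 1).filter fun w => w i = none).card = (Word n 1).card := by
    calc ∑ i : Fin n, ((Word n 1).filter fun w => w i = none).card
        = ∑ i : Fin n, ∑ w ∈ Word n 1, (if w i = none then 1 else 0) := by
          exact Finset.sum_congr rfl fun i _ => Finset.card_filter _ _
      _ = ∑ w ∈ Word n 1, ∑ i : Fin n, (if w i = none then 1 else 0) := Finset.sum_comm
      _ = ∑ w ∈ Word n 1, 1 := Finset.sum_congr rfl (fun w hw => by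
            rw [← Finset.card_filter]; simpa [Word] using hw)
      _ = (Word n 1).card := by rw [Finset.sum_const, smul_eq_mul, mul_one]
  rw [← h2, Finset.sum_congr rfl fun i _ => card_word1_filter hn i, Finset.sum_const,
    Finset.card_univ, Fintype.card_fin, smul_eq_mul]

lemma card_e0_fiber (x : Fin n → Bool) :
    ((Word n 1).filter fun w => e0 w = x).card
      = (Finset.univ.filter fun i => x i = false).card := by
  symm
  apply Finset.card_bij (fun i _ => mask x i)
  · intro i hi
    simp only [Finset.mem_filter, Finset.mem_univ, true_and] at hi ⊢
    exact ⟨mask_mem_word1 x i, e0_mask hi⟩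
  · intro i hi i' hi' h
    by_contra hne
    have := congrFun h i
    simp [mask, hne] at this
  · intro w hw
    simp only [Finset.mem_filter] at hw
    obtain ⟨i, hi, hother⟩ := word1_struct hw.1
    refine ⟨i, ?_, ?_⟩
    · simp only [Finset.mem_filter, Finset.mem_univ, true_and]
      rw [← hw.2]
      simp [e0, hi]
    · rw [← hw.2]
      exact (eq_mask hi hother).symm

lemma card_e1_fiber (x : Fin n → Bool) :
    ((Word n 1).filter fun w => e1 w = x).card
      = (Finset.univ.filter fun i => x i = true).card := by
  symm
  apply Finset.card_bij (fun i _ => mask x i)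
  · intro i hi
    simp only [Finset.mem_filter, Finset.mem_univ, true_and] at hi ⊢
    exact ⟨mask_mem_word1 x i, e1_mask hi⟩
  · intro i hi i' hi' h
    by_contra hne
    have := congrFun h i
    simp [mask, hne] at this
  · intro w hw
    simp only [Finset.mem_filter] at hw
    obtain ⟨i, hi, hother⟩ := word1_struct hw.1
    refine ⟨i, ?_, ?_⟩
    · simp only [Finset.mem_filter, Finset.mem_univ, true_and]
      rw [← hw.2]
      simp [e1, hi]
    · funext j
      by_cases hj : j = i
      · subst hj; simp [mask, hi]
      · obtain ⟨c, hc⟩ := Option.ne_none_iff_exists'.1 (hother j hj)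
        rw [← hw.2]
        simp [mask, hj, e1, hc]

lemma sum_e0 (S : Finset (Fin n → Bool)) :
    ∑ w ∈ Word n 1, bb S (e0 w)
      = ∑ x : Fin n → Bool, ((Finset.univ.filter fun i => x i = false).card : ℝ) * bb S x := by
  rw [← Finset.sum_fiberwise (Word n 1) e0 (fun w => bb S (e0 w))]
  apply Finset.sum_congr rfl
  intro x _
  calc ∑ w ∈ (Word n 1).filter fun w => e0 w = x, bb S (e0 w)
      = ∑ w ∈ (Word n 1).filter fun w => e0 w = x, bb S x := by
        apply Finset.sum_congr rfl
        intro w hw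
        rw [(Finset.mem_filter.1 hw).2]
    _ = _ := by
        rw [Finset.sum_const, card_e0_fiber, nsmul_eq_mul]

lemma sum_e1 (S : Finset (Fin n → Bool)) :
    ∑ w ∈ Word n 1, bb S (e1 w)
      = ∑ x : Fin n → Bool, ((Finset.univ.filter fun i => x i = true).card : ℝ) * bb S x := by
  rw [← Finset.sum_fiberwise (Word n 1) e1 (fun w => bb S (e1 w))]
  apply Finset.sum_congr rfl
  intro x _
  calc ∑ w ∈ (Word n 1).filter fun w => e1 w = x, bb S (e1 w)
      = ∑ w ∈ (Word n 1).filter fun w => e1 w = x, bb S x := by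
        apply Finset.sum_congr rfl
        intro w hw
        rw [(Finset.mem_filter.1 hw).2]
    _ = _ := by
        rw [Finset.sum_const, card_e1_fiber, nsmul_eq_mul]

lemma degree_sum (S : Finset (Fin n → Bool)) :
    ∑ w ∈ Word n 1, (bb S (e0 w) + bb S (e1 w))
      = (n : ℝ) * ∑ x : Fin n → Bool, bb S x := by
  rw [Finset.sum_add_distrib, sum_e0, sum_e1, ← Finset.sum_add_distrib, Finset.mul_sum]
  apply Finset.sum_congr rfl
  intro x _
  rw [← add_mul]
  congr 1
  have hsplit : (Finset.univ.filter fun i : Fin n => x i = false).card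
      + (Finset.univ.filter fun i : Fin n => ¬ x i = false).card
      = (Finset.univ : Finset (Fin n)).card :=
    Finset.card_filter_add_card_filter_not _
  have heq : (Finset.univ.filter fun i : Fin n => ¬ x i = false)
      = (Finset.univ.filter fun i : Fin n => x i = true) := by
    apply Finset.filter_congr
    intro i _
    simp
  rw [heq] at hsplit
  rw [← Nat.cast_add, hsplit, Finset.card_univ, Fintype.card_fin]

lemma e0_ne_e1 {w : Fin n → Option Bool} (hw : w ∈ Word n 1) : e0 w ≠ e1 w := by
  obtain ⟨i, hi, _⟩ := word1_struct hw
  intro h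
  have := congrFun h i
  simp [e0, e1, hi] at this

lemma mem_cube_iff {w : Fin n → Option Bool} (hw : w ∈ Word n 1) (x : Fin n → Bool) :
    x ∈ cube w ↔ x = e0 w ∨ x = e1 w := by
  obtain ⟨i, hi, hother⟩ := word1_struct hw
  simp only [cube, Finset.mem_filter, Finset.mem_univ, true_and]
  constructor
  · intro h
    cases hx : x i
    · left
      funext j
      by_cases hj : j = i
      · subst hj; simp [e0, hi, hx]
      · obtain ⟨c, hc⟩ := Option.ne_none_iff_exists'.1 (hother j hj)
        rw [h j c hc]; simp [e0, hc]
    · right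
      funext j
      by_cases hj : j = i
      · subst hj; simp [e1, hi, hx]
      · obtain ⟨c, hc⟩ := Option.ne_none_iff_exists'.1 (hother j hj)
        rw [h j c hc]; simp [e1, hc]
  · rintro (rfl | rfl) j c hc <;> simp [e0, e1, hc]

lemma cube_subset_iff {w : Fin n → Option Bool} (hw : w ∈ Word n 1)
    (S : Finset (Fin n → Bool)) : cube w ⊆ S ↔ e0 w ∈ S ∧ e1 w ∈ S := by
  constructor
  · intro h
    exact ⟨h ((mem_cube_iff hw _).2 (Or.inl rfl)), h ((mem_cube_iff hw _).2 (Or.inr rfl))⟩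
  · intro h x hx
    rcases (mem_cube_iff hw x).1 hx with rfl | rfl
    · exact h.1
    · exact h.2

lemma indicator_eq {w : Fin n → Option Bool} (hw : w ∈ Word n 1)
    (S : Finset (Fin n → Bool)) :
    (if cube w ⊆ S then (1:ℝ) else 0)
      = (bb S (e0 w) + 1/2) * (bb S (e1 w) + 1/2) := by
  unfold bb
  by_cases h0 : e0 w ∈ S <;> by_cases h1 : e1 w ∈ S <;>
    simp [cube_subset_iff hw, h0, h1]

lemma Ex_congr {f g : Finset (Fin n → Bool) → ℝ} (h : ∀ S, f S = g S) :
    Ex n f = Ex n g := by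
  unfold Ex
  congr 1
  exact Finset.sum_congr rfl fun S _ => h S

lemma Ex_bb (x : Fin n → Bool) : Ex n (fun S => bb S x) = 0 := by
  have h0 := Ex_zero_of_odd_card ({x} : Multiset _) (by simp)
  simpa using h0

lemma E2 {a b : Fin n → Bool} (h : a ≠ b) :
    Ex n (fun S => bb S a * bb S b) = 0 := by
  have h0 := Ex_zero_of_odd (a ::ₘ {b})
    ⟨a, by simp [Multiset.count_cons, Multiset.count_singleton, h]⟩
  simpa using h0

lemma E3 (x y z : Fin n → Bool) :
    Ex n (fun S => bb S x * bb S y * bb S z) = 0 := by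
  have h0 := Ex_zero_of_odd_card (x ::ₘ y ::ₘ {z}) (by simp; decide)
  simpa [mul_assoc] using h0

lemma E5 (a b c d e : Fin n → Bool) :
    Ex n (fun S => bb S a * bb S b * bb S c * bb S d * bb S e) = 0 := by
  have h0 := Ex_zero_of_odd_card (a ::ₘ b ::ₘ c ::ₘ d ::ₘ {e}) (by simp; decide)
  have hsh : ∀ S : Finset (Fin n → Bool),
      ((a ::ₘ b ::ₘ c ::ₘ d ::ₘ {e}).map (bb S)).prod
        = bb S a * bb S b * bb S c * bb S d * bb S e := by
    intro S; simp; ring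
  rw [Ex_congr hsh] at h0
  exact h0

lemma prod_mval_pair {a b : Fin n → Bool} (h : a ≠ b) :
    ∏ z : Fin n → Bool, mval ((a ::ₘ b ::ₘ a ::ₘ {b}).count z) = 1/16 := by
  have hsub : ∏ z : Fin n → Bool, mval ((a ::ₘ b ::ₘ a ::ₘ {b}).count z)
      = ∏ z ∈ ({a, b} : Finset (Fin n → Bool)), mval ((a ::ₘ b ::ₘ a ::ₘ {b}).count z) := by
    symm
    apply Finset.prod_subset (Finset.subset_univ _)
    intro z _ hz
    simp only [Finset.mem_insert, Finset.mem_singleton, not_or] at hz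
    rw [Multiset.count_eq_zero_of_notMem (by simp [hz.1, hz.2]), mval_zero]
  rw [hsub, Finset.prod_insert (by simp [h]), Finset.prod_singleton]
  have hca : (a ::ₘ b ::ₘ a ::ₘ {b}).count a = 2 := by
    simp [Multiset.count_cons, Multiset.count_singleton, h]
  have hcb : (a ::ₘ b ::ₘ a ::ₘ {b}).count b = 2 := by
    simp [Multiset.count_cons, Multiset.count_singleton, Ne.symm h]
  rw [hca, hcb, mval_two]
  norm_num

lemma E4 {a b : Fin n → Bool} (h : a ≠ b) (x y : Fin n → Bool) :
    Ex n (fun S => bb S a * bb S b * bb S x * bb S y)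
      = if (x = a ∧ y = b) ∨ (x = b ∧ y = a) then 1/16 else 0 := by
  have hms : ∀ S : Finset (Fin n → Bool),
      bb S a * bb S b * bb S x * bb S y = ((a ::ₘ b ::ₘ x ::ₘ {y}).map (bb S)).prod := by
    intro S; simp; ring
  rw [Ex_congr hms]
  by_cases hcase : (x = a ∧ y = b) ∨ (x = b ∧ y = a)
  · rw [if_pos hcase]
    have hperm : (a ::ₘ b ::ₘ x ::ₘ {y} : Multiset (Fin n → Bool))
        = a ::ₘ b ::ₘ a ::ₘ {b} := by
      rcases hcase with ⟨hx, hy⟩ | ⟨hx, hy⟩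
      · rw [hx, hy]
      · rw [hx, hy]
        exact congrArg (a ::ₘ ·) (congrArg (b ::ₘ ·) (Multiset.cons_swap b a {}))
    rw [hperm, Ex_prod_bb, prod_mval_pair h]
  · rw [if_neg hcase]
    push_neg at hcase
    apply Ex_zero_of_odd
    by_cases hxy : x = y
    · refine ⟨a, ?_⟩
      by_cases hxa : a = x
      · have hxb : x ≠ b := fun hh => h (hxa.trans hh)
        have hyb : y ≠ b := fun hh => hxb (hxy.trans hh)
        simp [Multiset.count_cons, Multiset.count_singleton, h, hxa, hxy, hxb, hyb]
        all_goals decide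
      · have hay : a ≠ y := fun hh => hxa (hh.trans hxy.symm)
        simp [Multiset.count_cons, Multiset.count_singleton, h, hxa, hay]
        all_goals decide
    · by_cases hx : x = a ∨ x = b
      · have hy : y ≠ a ∧ y ≠ b := by
          constructor
          · intro hya
            rcases hx with hxb | hxb
            · exact hxy (hxb.trans (hya.symm))
            · exact hcase.2 hxb hya
          · intro hyb
            rcases hx with hxb | hxb
            · exact hcase.1 hxb hyb
            · exact hxy (hxb.trans (hyb.symm))
        refine ⟨y, ?_⟩
        have hyx : y ≠ x := fun hh => hxy hh.symm
        simp [Multiset.count_cons, Multiset.count_singleton, hy.1, hy.2, hyx]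
        all_goals decide
      · push_neg at hx
        refine ⟨x, ?_⟩
        simp [Multiset.count_cons, Multiset.count_singleton, hx.1, hx.2, hxy]
        all_goals decide

def phi {n : ℕ} (x : Fin n → Bool) : Fin n → ZMod 2 := fun j => if x j then 1 else 0

def delta {n : ℕ} (i : Fin n) : Fin n → ZMod 2 := fun j => if j = i then 1 else 0

lemma phi_edge {w : Fin n → Option Bool} {i : Fin n} (hi : w i = none)
    (hother : ∀ j, j ≠ i → w j ≠ none) : phi (e0 w) + phi (e1 w) = delta i := by
  funext j
  by_cases hj : j = i
  · subst hj
    simp [phi, delta, e0, e1, hi]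
  · obtain ⟨c, hc⟩ := Option.ne_none_iff_exists'.1 (hother j hj)
    have : phi (e0 w) j = phi (e1 w) j := by
      simp [phi, e0, e1, hc]
    have hz2 : ∀ a : ZMod 2, a + a = 0 := by decide
    simp only [Pi.add_apply, this, delta, hj, if_false]
    exact hz2 _

lemma sum_map_phi_even (ms : Multiset (Fin n → Bool))
    (h : ∀ z, Even (ms.count z)) : (ms.map phi).sum = 0 := by
  rw [Finset.sum_multiset_map_count]
  apply Finset.sum_eq_zero
  intro z _
  obtain ⟨k, hk⟩ := h z
  rw [hk, add_nsmul]
  have hz2 : ∀ a : ZMod 2, a + a = 0 := by decide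
  funext j
  simp only [Pi.add_apply, Pi.smul_apply, Pi.zero_apply]
  exact hz2 _

lemma delta_sum_ne (i1 i2 i3 : Fin n) : delta i1 + delta i2 + delta i3 ≠ 0 := by
  intro h
  by_cases h12 : i1 = i2
  · subst h12
    have h3 := congrFun h i3
    simp only [Pi.add_apply, Pi.zero_apply, delta] at h3
    split_ifs at h3 <;> (revert h3; decide)
  · by_cases h31 : i3 = i1
    · subst h31
      have h3 := congrFun h i2
      simp only [Pi.add_apply, Pi.zero_apply, delta] at h3
      split_ifs at h3 <;> first
        | (revert h3; decide)
        | simp_all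
    · by_cases h32 : i3 = i2
      · subst h32
        have h3 := congrFun h i1
        simp only [Pi.add_apply, Pi.zero_apply, delta] at h3
        split_ifs at h3 <;> first
          | (revert h3; decide)
          | simp_all
      · have h3 := congrFun h i1
        simp only [Pi.add_apply, Pi.zero_apply, delta] at h3
        split_ifs at h3 <;> first
          | (revert h3; decide)
          | simp_all

lemma E6 {w1 w2 w3 : Fin n → Option Bool} (h1 : w1 ∈ Word n 1) (h2 : w2 ∈ Word n 1)
    (h3 : w3 ∈ Word n 1) :
    Ex n (fun S => bb S (e0 w1) * bb S (e1 w1) * bb S (e0 w2) * bb S (e1 w2)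
      * bb S (e0 w3) * bb S (e1 w3)) = 0 := by
  obtain ⟨i1, hi1, ho1⟩ := word1_struct h1
  obtain ⟨i2, hi2, ho2⟩ := word1_struct h2
  obtain ⟨i3, hi3, ho3⟩ := word1_struct h3
  have hms : ∀ S : Finset (Fin n → Bool),
      bb S (e0 w1) * bb S (e1 w1) * bb S (e0 w2) * bb S (e1 w2)
        * bb S (e0 w3) * bb S (e1 w3)
      = ((e0 w1 ::ₘ e1 w1 ::ₘ e0 w2 ::ₘ e1 w2 ::ₘ e0 w3 ::ₘ {e1 w3}).map (bb S)).prod := by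
    intro S; simp; ring
  rw [Ex_congr hms]
  apply Ex_zero_of_odd
  by_contra hc
  push_neg at hc
  simp only [Nat.not_odd_iff_even] at hc
  have h0 := sum_map_phi_even _ hc
  have hsum : ((e0 w1 ::ₘ e1 w1 ::ₘ e0 w2 ::ₘ e1 w2 ::ₘ e0 w3 ::ₘ {e1 w3}).map phi).sum
      = delta i1 + delta i2 + delta i3 := by
    simp only [Multiset.map_cons, Multiset.sum_cons, Multiset.map_singleton,
      Multiset.sum_singleton]
    rw [← phi_edge hi1 ho1, ← phi_edge hi2 ho2, ← phi_edge hi3 ho3]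
    abel
  exact delta_sum_ne i1 i2 i3 (hsum ▸ h0)

lemma sum3_mul {ι1 ι2 ι3 : Type*} (s : Finset ι1) (t : Finset ι2) (u : Finset ι3)
    (f : ι1 → ℝ) (g : ι2 → ℝ) (h : ι3 → ℝ) :
    (∑ i ∈ s, f i) * (∑ j ∈ t, g j) * (∑ k ∈ u, h k)
      = ∑ i ∈ s, ∑ j ∈ t, ∑ k ∈ u, f i * g j * h k := by
  simp only [Finset.sum_mul, Finset.mul_sum]
  calc ∑ k ∈ u, ∑ j ∈ t, ∑ i ∈ s, f i * g j * h k
      = ∑ j ∈ t, ∑ k ∈ u, ∑ i ∈ s, f i * g j * h k := Finset.sum_comm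
    _ = ∑ j ∈ t, ∑ i ∈ s, ∑ k ∈ u, f i * g j * h k :=
        Finset.sum_congr rfl fun j _ => Finset.sum_comm
    _ = ∑ i ∈ s, ∑ j ∈ t, ∑ k ∈ u, f i * g j * h k := Finset.sum_comm

lemma sum_pair_delta {a b : Fin n → Bool} (h : a ≠ b) :
    ∑ x : Fin n → Bool, ∑ y : Fin n → Bool,
      (if (x = a ∧ y = b) ∨ (x = b ∧ y = a) then (1/16:ℝ) else 0) = 1/8 := by
  have hsplit : ∀ x y : Fin n → Bool,
      (if (x = a ∧ y = b) ∨ (x = b ∧ y = a) then (1/16:ℝ) else 0)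
      = (if x = a ∧ y = b then (1/16:ℝ) else 0)
        + (if x = b ∧ y = a then (1/16:ℝ) else 0) := by
    intro x y
    by_cases h1 : x = a ∧ y = b <;> by_cases h2 : x = b ∧ y = a
    · exact absurd (h1.1.symm.trans h2.1) h
    all_goals simp [h1, h2, h, Ne.symm h]
  simp only [hsplit, Finset.sum_add_distrib]
  have h1 : ∀ u v : Fin n → Bool,
      ∑ x : Fin n → Bool, ∑ y : Fin n → Bool,
        (if x = u ∧ y = v then (1/16:ℝ) else 0) = 1/16 := by
    intro u v
    simp [ite_and, Finset.sum_ite_eq', Finset.mem_univ]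
  rw [h1, h1]
  norm_num

end TCM

open TCM

/-- The third central moment of the number of edges contained in a uniformly
random subset of `{0,1}^n` equals `3 n³ 2^n / 64`, where the mean is
`μ = E[X₁] = n·2^(n-1)/4`. -/
theorem third_central_moment_X1 (n : ℕ) (hn : 1 ≤ n) :
    Ex n (fun S => (Xr n 1 S : ℝ)) = (n : ℝ) * 2 ^ (n - 1) / 4 ∧
    Ex n (fun S => ((Xr n 1 S : ℝ) - (n : ℝ) * 2 ^ (n - 1) / 4) ^ 3)
      = 3 * (n : ℝ) ^ 3 * 2 ^ n / 64 := by
  classical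
  have hXr : ∀ S : Finset (Fin n → Bool),
      (Xr n 1 S : ℝ) = (∑ w ∈ Word n 1, bb S (e0 w) * bb S (e1 w))
        + ((n:ℝ)/2) * (∑ x : Fin n → Bool, bb S x) + ((n:ℝ) * 2^(n-1)/4) := by
    intro S
    have h1 : (Xr n 1 S : ℝ) = ∑ w ∈ Word n 1, (if cube w ⊆ S then (1:ℝ) else 0) := by
      rw [Xr, Finset.card_filter]
      push_cast
      rfl
    rw [h1, Finset.sum_congr rfl (fun w hw => indicator_eq hw S),
      Finset.sum_congr rfl (fun w _ =>
        (by ring : (bb S (e0 w) + 1/2) * (bb S (e1 w) + 1/2)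
          = bb S (e0 w) * bb S (e1 w)
            + (bb S (e0 w) + bb S (e1 w))/2 + 1/4)),
      Finset.sum_add_distrib, Finset.sum_add_distrib]
    have hdeg : ∑ w ∈ Word n 1, (bb S (e0 w) + bb S (e1 w))/2
        = ((n:ℝ)/2) * ∑ x : Fin n → Bool, bb S x := by
      rw [← Finset.sum_div, degree_sum]
      ring
    rw [hdeg, Finset.sum_const, card_word1 hn, nsmul_eq_mul]
    push_cast
    ring
  constructor
  · rw [Ex_congr hXr, Ex_add, Ex_add, Ex_const_mul, Ex_const, Ex_sum, Ex_sum,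
      Finset.sum_congr rfl (fun w hw => E2 (e0_ne_e1 hw)),
      Finset.sum_congr rfl (fun x _ => Ex_bb x)]
    simp
  · have hcube : ∀ S : Finset (Fin n → Bool),
        ((Xr n 1 S : ℝ) - (n:ℝ) * 2^(n-1)/4)^3
        = (∑ w ∈ Word n 1, bb S (e0 w) * bb S (e1 w))^3
          + (3*((n:ℝ)/2)) * ((∑ w ∈ Word n 1, bb S (e0 w) * bb S (e1 w))^2
              * (∑ x : Fin n → Bool, bb S x))
          + (3*((n:ℝ)/2)^2) * ((∑ w ∈ Word n 1, bb S (e0 w) * bb S (e1 w))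
              * (∑ x : Fin n → Bool, bb S x)^2)
          + (((n:ℝ)/2)^3) * (∑ x : Fin n → Bool, bb S x)^3 := by
      intro S
      rw [show (Xr n 1 S : ℝ) - (n:ℝ) * 2^(n-1)/4
          = (∑ w ∈ Word n 1, bb S (e0 w) * bb S (e1 w))
            + ((n:ℝ)/2) * (∑ x : Fin n → Bool, bb S x) from by rw [hXr S]; ring]
      ring
    rw [Ex_congr hcube, Ex_add, Ex_add, Ex_add, Ex_const_mul, Ex_const_mul, Ex_const_mul]
    have hQ3 : Ex n (fun S => (∑ w ∈ Word n 1, bb S (e0 w) * bb S (e1 w))^3) = 0 := by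
      have hexp : ∀ S : Finset (Fin n → Bool),
          (∑ w ∈ Word n 1, bb S (e0 w) * bb S (e1 w))^3
          = ∑ w1 ∈ Word n 1, ∑ w2 ∈ Word n 1, ∑ w3 ∈ Word n 1,
              (bb S (e0 w1) * bb S (e1 w1)) * (bb S (e0 w2) * bb S (e1 w2))
                * (bb S (e0 w3) * bb S (e1 w3)) := by
        intro S
        rw [show ∀ a : ℝ, a^3 = a*a*a from fun a => by ring, sum3_mul]
      rw [Ex_congr hexp, Ex_sum]
      apply Finset.sum_eq_zero
      intro w1 hw1
      rw [Ex_sum]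
      apply Finset.sum_eq_zero
      intro w2 hw2
      rw [Ex_sum]
      apply Finset.sum_eq_zero
      intro w3 hw3
      rw [Ex_congr (g := fun S => bb S (e0 w1) * bb S (e1 w1) * bb S (e0 w2)
        * bb S (e1 w2) * bb S (e0 w3) * bb S (e1 w3)) (fun S => by ring)]
      exact E6 hw1 hw2 hw3
    have hQ2L : Ex n (fun S => (∑ w ∈ Word n 1, bb S (e0 w) * bb S (e1 w))^2
        * (∑ x : Fin n → Bool, bb S x)) = 0 := by
      have hexp : ∀ S : Finset (Fin n → Bool),
          (∑ w ∈ Word n 1, bb S (e0 w) * bb S (e1 w))^2 * (∑ x : Fin n → Bool, bb S x)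
          = ∑ w1 ∈ Word n 1, ∑ w2 ∈ Word n 1, ∑ x : Fin n → Bool,
              (bb S (e0 w1) * bb S (e1 w1)) * (bb S (e0 w2) * bb S (e1 w2)) * bb S x := by
        intro S
        rw [show ∀ a b : ℝ, a^2*b = a*a*b from fun a b => by ring, sum3_mul]
      rw [Ex_congr hexp, Ex_sum]
      apply Finset.sum_eq_zero
      intro w1 hw1
      rw [Ex_sum]
      apply Finset.sum_eq_zero
      intro w2 hw2
      rw [Ex_sum]
      apply Finset.sum_eq_zero
      intro x _
      rw [Ex_congr (g := fun S => bb S (e0 w1) * bb S (e1 w1) * bb S (e0 w2)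
        * bb S (e1 w2) * bb S x) (fun S => by ring)]
      exact E5 _ _ _ _ _
    have hL3 : Ex n (fun S => (∑ x : Fin n → Bool, bb S x)^3) = 0 := by
      have hexp : ∀ S : Finset (Fin n → Bool),
          (∑ x : Fin n → Bool, bb S x)^3
          = ∑ x : Fin n → Bool, ∑ y : Fin n → Bool, ∑ z : Fin n → Bool,
              bb S x * bb S y * bb S z := by
        intro S
        rw [show ∀ a : ℝ, a^3 = a*a*a from fun a => by ring, sum3_mul]
      rw [Ex_congr hexp, Ex_sum]
      apply Finset.sum_eq_zero
      intro x _
      rw [Ex_sum]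
      apply Finset.sum_eq_zero
      intro y _
      rw [Ex_sum]
      apply Finset.sum_eq_zero
      intro z _
      exact E3 x y z
    have hQL2 : Ex n (fun S => (∑ w ∈ Word n 1, bb S (e0 w) * bb S (e1 w))
        * (∑ x : Fin n → Bool, bb S x)^2) = (n:ℝ) * 2^(n-1) / 8 := by
      have hexp : ∀ S : Finset (Fin n → Bool),
          (∑ w ∈ Word n 1, bb S (e0 w) * bb S (e1 w)) * (∑ x : Fin n → Bool, bb S x)^2
          = ∑ w ∈ Word n 1, ∑ x : Fin n → Bool, ∑ y : Fin n → Bool,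
              (bb S (e0 w) * bb S (e1 w)) * bb S x * bb S y := by
        intro S
        rw [show ∀ a b : ℝ, a*b^2 = a*b*b from fun a b => by ring, sum3_mul]
      rw [Ex_congr hexp, Ex_sum]
      have hinner : ∀ w ∈ Word n 1,
          Ex n (fun S => ∑ x : Fin n → Bool, ∑ y : Fin n → Bool,
            (bb S (e0 w) * bb S (e1 w)) * bb S x * bb S y) = 1/8 := by
        intro w hw
        rw [Ex_sum]
        calc ∑ x : Fin n → Bool, Ex n (fun S => ∑ y : Fin n → Bool,
              (bb S (e0 w) * bb S (e1 w)) * bb S x * bb S y)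
            = ∑ x : Fin n → Bool, ∑ y : Fin n → Bool,
                (if (x = e0 w ∧ y = e1 w) ∨ (x = e1 w ∧ y = e0 w) then (1/16:ℝ) else 0) := by
              apply Finset.sum_congr rfl
              intro x _
              rw [Ex_sum]
              apply Finset.sum_congr rfl
              intro y _
              rw [Ex_congr (g := fun S => bb S (e0 w) * bb S (e1 w) * bb S x * bb S y)
                (fun S => by ring)]
              exact E4 (e0_ne_e1 hw) x y
          _ = 1/8 := sum_pair_delta (e0_ne_e1 hw)
      rw [Finset.sum_congr rfl hinner, Finset.sum_const, card_word1 hn, nsmul_eq_mul]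
      push_cast
      ring
    rw [hQ3, hQ2L, hQL2, hL3]
    have h2 : (2:ℝ)^n = 2^(n-1)*2 := by
      conv_lhs => rw [show n = n - 1 + 1 from (Nat.succ_pred_eq_of_pos hn).symm]
      rw [pow_succ]
    rw [h2]
    ring
end
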